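/- arXiv:2211.05068 — 7 statements merged into one kernel-verified Lean document; each statement's English description precedes it below -/
import Mathlib

section
/- Let α be a self-dual basis of F_{q^m} over F_q, let 0 ≤ k ≤ m, and let e be an integer with 0 ≤ e ≤ k and e ≤ m−1. Then the F_{q^m}-dimension of the e-Galois hull of the Gabidulin code G_k(α) equals min(m−k, e). -/
open Finset Matrix

private lemma hull_aux_frob_inj (q m : ℕ) (hq2 : 2 ≤ q) (hm : 0 < m)
    (F : Type) [Field F] [Fintype F] (hF : Fintype.card F = q ^ m)
    (s t : Fin m) (h : ∀ y : F, y ^ q ^ (s:ℕ) = y ^ q ^ (t:ℕ)) : s = t := by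
  classical
  obtain ⟨ζ, hζ⟩ := IsCyclic.exists_generator (α := Fˣ)
  have hord : orderOf ζ = q ^ m - 1 := by
    rw [orderOf_eq_card_of_forall_mem_zpowers hζ, Nat.card_eq_fintype_card,
      Fintype.card_units, hF]
  have hz : ζ ^ q ^ (s:ℕ) = ζ ^ q ^ (t:ℕ) := by
    ext
    push_cast [Units.val_pow_eq_pow_val]
    exact h ζ
  have hmod : q ^ (s:ℕ) ≡ q ^ (t:ℕ) [MOD q ^ m - 1] := by
    rw [← hord]; exact (pow_eq_pow_iff_modEq).mp hz
  have hlt : ∀ u : Fin m, q ^ (u:ℕ) < q ^ m - 1 ∨ m = 1 := by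
    intro u
    rcases eq_or_lt_of_le (Nat.succ_le_of_lt hm) with h1 | h1
    · right; omega
    · left
      have h2 : q ^ (u:ℕ) ≤ q ^ (m-1) := Nat.pow_le_pow_right (by omega) (by omega)
      have h3 : q ^ (m-1) * 2 ≤ q ^ (m-1) * q := Nat.mul_le_mul_left _ hq2
      have h4 : q ^ (m-1) * q = q ^ m := by
        rw [← pow_succ]; congr 1; omega
      have h5 : 1 < q ^ (m-1) := Nat.one_lt_pow (by omega) hq2
      omega
  rcases hlt s with hs | h1
  · rcases hlt t with ht | h1
    · have := Nat.ModEq.eq_of_lt_of_lt hmod hs ht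
      exact Fin.ext (Nat.pow_right_injective hq2 this)
    · omega
  · have : (s:ℕ) = 0 ∧ (t:ℕ) = 0 := by constructor <;> omega
    exact Fin.ext (by omega)

private lemma hull_aux_trace_formula (q m : ℕ) (hq : IsPrimePow q) (hm : 0 < m)
    (K F : Type) [Field K] [Field F] [Algebra K F] [Fintype K] [Fintype F]
    (hK : Fintype.card K = q) (hF : Fintype.card F = q ^ m) (x : F) :
    algebraMap K F (Algebra.trace K F x) = ∑ s ∈ Finset.range m, x ^ q ^ s := by
  classical
  obtain ⟨p, n, hp, hn, hpn⟩ := hq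
  have hp' : p.Prime := Nat.prime_iff.mpr hp
  haveI : Fact p.Prime := ⟨hp'⟩
  have hq2 : 2 ≤ q := by
    calc 2 ≤ p := hp'.two_le
    _ ≤ p ^ n := Nat.le_self_pow hn.ne' p
    _ = q := hpn
  have hcharK : CharP K p := by
    obtain ⟨t, htp, ht⟩ := FiniteField.card K (ringChar K)
    have : p ∣ ringChar K ^ (t : ℕ) := by
      rw [← ht, hK, ← hpn]; exact dvd_pow_self p hn.ne'
    have : p = ringChar K :=
      ((Nat.prime_dvd_prime_iff_eq hp' htp).mp (hp'.dvd_of_dvd_pow this))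
    rw [this]; exact ringChar.charP K
  haveI := hcharK
  haveI : CharP F p := charP_of_injective_algebraMap' K p
  haveI : FiniteDimensional K F := inferInstance
  have hrank : Module.finrank K F = m := by
    have h1 : Fintype.card F = Fintype.card K ^ Module.finrank K F := Module.card_eq_pow_finrank
    rw [hF, hK] at h1
    exact (Nat.pow_right_injective hq2 h1.symm)
  have key : ∀ s : ℕ, ∃ σ : F ≃ₐ[K] F, ∀ y : F, σ y = y ^ q ^ s := by
    intro s
    have hcomm : ∀ a : K, iterateFrobenius F p (n * s) (algebraMap K F a) = algebraMap K F a := by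
      intro a
      rw [iterateFrobenius_def, ← map_pow]
      congr 1
      have : a ^ p ^ (n * s) = a ^ (q:ℕ) ^ s := by rw [← hpn, pow_mul]
      rw [this, ← hK, FiniteField.pow_card_pow]
    refine ⟨AlgEquiv.ofBijective ⟨iterateFrobenius F p (n * s), hcomm⟩
      ((Finite.injective_iff_bijective).mp (iterateFrobenius F p (n*s)).injective), ?_⟩
    intro y
    show iterateFrobenius F p (n * s) y = _
    rw [iterateFrobenius_def, ← hpn, pow_mul]
  choose ψ hψ using key
  have hginj : Function.Injective (fun s : Fin m => ψ (s : ℕ)) := by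
    intro s t hst
    refine hull_aux_frob_inj q m hq2 hm F hF s t ?_
    intro y
    rw [← hψ (s:ℕ) y, ← hψ (t:ℕ) y]
    exact congrArg (fun σ : F ≃ₐ[K] F => σ y) hst
  have hgbij : Function.Bijective (fun s : Fin m => ψ (s : ℕ)) := by
    rw [Fintype.bijective_iff_injective_and_card]
    refine ⟨hginj, ?_⟩
    rw [Fintype.card_fin, ← Nat.card_eq_fintype_card, IsGalois.card_aut_eq_finrank, hrank]
  have hcomp : ∑ s : Fin m, x ^ q ^ (s:ℕ) = ∑ σ : F ≃ₐ[K] F, σ x :=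
    Fintype.sum_bijective _ hgbij _ _ (fun s => (hψ (s:ℕ) x).symm)
  have h1 := trace_eq_sum_automorphisms (K := K) x
  rw [h1]
  exact hcomp.symm.trans (Fin.sum_univ_eq_sum_range (fun s => x ^ q ^ s) m)

private lemma hull_aux_orth (q m : ℕ) (hq : IsPrimePow q) (hm : 0 < m)
    (K F : Type) [Field K] [Field F] [Algebra K F] [Fintype K] [Fintype F]
    (hK : Fintype.card K = q) (hF : Fintype.card F = q ^ m)
    (α : Fin m → F)
    (hsd : ∀ i j, Algebra.trace K F (α i * α j) = if i = j then 1 else 0)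
    (s t : Fin m) :
    ∑ j, α j ^ q ^ (s:ℕ) * α j ^ q ^ (t:ℕ) = if s = t then (1:F) else 0 := by
  classical
  set N : Matrix (Fin m) (Fin m) F := Matrix.of (fun s j => α j ^ q ^ (s:ℕ)) with hN
  have hNtN : Nᵀ * N = 1 := by
    ext i j
    rw [Matrix.mul_apply]
    have : ∀ u : Fin m, Nᵀ i u * N u j = (α i * α j) ^ q ^ (u:ℕ) := by
      intro u
      simp only [Matrix.transpose_apply, hN, Matrix.of_apply, mul_pow]
    rw [Finset.sum_congr rfl (fun u _ => this u)]
    have h2 : ∑ u : Fin m, (α i * α j) ^ q ^ (u:ℕ)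
        = ∑ u ∈ Finset.range m, (α i * α j) ^ q ^ u :=
      Fin.sum_univ_eq_sum_range (fun u => (α i * α j) ^ q ^ u) m
    rw [h2, ← hull_aux_trace_formula q m hq hm K F hK hF, hsd i j]
    by_cases hij : i = j <;> simp [hij, Matrix.one_apply]
  have hNNt : N * Nᵀ = 1 := mul_eq_one_comm.mp hNtN
  have := congrFun (congrFun hNNt s) t
  rw [Matrix.mul_apply] at this
  simp only [Matrix.transpose_apply, hN, Matrix.of_apply] at this
  rw [this]
  simp [Matrix.one_apply]

noncomputable def gab {F : Type*} [Field F] (q : ℕ) {m : ℕ} (k : ℕ) (α : Fin m → F) :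
    Submodule F (Fin m → F) :=
  Submodule.span F (Set.range fun i : Fin k => fun j : Fin m => α j ^ q ^ (i : ℕ))

def galoisDual {F : Type*} [Field F] (q e : ℕ) {n : ℕ} (C : Submodule F (Fin n → F)) :
    Submodule F (Fin n → F) where
  carrier := {x | ∀ c ∈ C, ∑ i, x i * c i ^ q ^ e = 0}
  add_mem' := by
    intro a b ha hb c hc
    simp only [Set.mem_setOf_eq] at *
    simp [Pi.add_apply, add_mul, Finset.sum_add_distrib, ha c hc, hb c hc]
  zero_mem' := by
    intro c hc
    simp
  smul_mem' := by
    intro r a ha c hc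
    simp only [Set.mem_setOf_eq] at *
    simp [Pi.smul_apply, smul_eq_mul, mul_assoc, ← Finset.mul_sum, ha c hc]


/-- For a self-dual basis `α` and `0 ≤ e ≤ k`, the `e`-Galois hull of `G_k(α)`
has dimension `min (m - k) e`. -/
theorem hull_dim_gab_of_le
    (q m : ℕ) (hq : IsPrimePow q) (hm : 0 < m)
    (K F : Type) [Field K] [Field F] [Algebra K F] [Fintype K] [Fintype F]
    (hK : Fintype.card K = q) (hF : Fintype.card F = q ^ m)
    (α : Fin m → F) (hα : ∃ b : Module.Basis (Fin m) K F, ⇑b = α)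
    (hsd : ∀ i j, Algebra.trace K F (α i * α j) = if i = j then 1 else 0)
    (k e : ℕ) (hk : k ≤ m) (he : e ≤ k) (hem : e ≤ m - 1) :
    Module.finrank F ↥(gab q k α ⊓ galoisDual q e (gab q k α)) = min (m - k) e := by
  classical
  have hq2 : 2 ≤ q := hq.two_le
  have hem' : e < m := by omega
  set v : ℕ → (Fin m → F) := fun s j => α j ^ q ^ s with hv
  have hqm : ∀ x : F, x ^ q ^ m = x := by
    intro x; rw [← hF]; exact FiniteField.pow_card x
  have hstable : ∀ (a : ℕ) (x : F), x ^ (q ^ m) ^ a = x := by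
    intro a
    induction a with
    | zero => simp
    | succ a ih => intro x; rw [pow_succ, pow_mul, ih x, hqm x]
  have hvmod : ∀ s, v s = v (s % m) := by
    intro s
    funext j
    show α j ^ q ^ s = α j ^ q ^ (s % m)
    conv_lhs => rw [← Nat.div_add_mod s m]
    rw [pow_add, pow_mul q m (s / m), pow_mul (α j), hstable]
  set w : Fin m → (Fin m → F) := fun s => v (s:ℕ) with hw
  have horth : ∀ s t : Fin m, ∑ j, w s j * w t j = if s = t then (1:F) else 0 :=
    fun s t => hull_aux_orth q m hq hm K F hK hF α hsd s t
  -- dot with basis vectors extracts coefficients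
  have hdot : ∀ (g : Fin m → F) (t : Fin m), ∑ j, (∑ s, g s • w s) j * w t j = g t := by
    intro g t
    have h1 : ∀ j, (∑ s, g s • w s) j * w t j = ∑ s, g s * (w s j * w t j) := by
      intro j
      rw [Finset.sum_apply, Finset.sum_mul]
      exact Finset.sum_congr rfl fun s _ => by simp [mul_assoc]
    rw [Finset.sum_congr rfl fun j _ => h1 j, Finset.sum_comm]
    have h2 : ∀ s : Fin m, ∑ j, g s * (w s j * w t j) = g s * (if s = t then (1:F) else 0) := by
      intro s
      rw [← Finset.mul_sum, horth s t]
    rw [Finset.sum_congr rfl fun s _ => h2 s]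
    simp [Finset.sum_ite_eq', mul_ite]
  have hli : LinearIndependent F w := by
    rw [Fintype.linearIndependent_iff]
    intro g hg t
    have := hdot g t
    rw [hg] at this
    simpa using this.symm
  have hcard : Fintype.card (Fin m) = Module.finrank F (Fin m → F) := by
    simp [Module.finrank_pi]
  haveI : Nonempty (Fin m) := ⟨⟨0, hm⟩⟩
  let b : Module.Basis (Fin m) F (Fin m → F) := basisOfLinearIndependentOfCardEqFinrank hli hcard
  have hb : ∀ s, b s = w s := fun s =>
    congrFun (coe_basisOfLinearIndependentOfCardEqFinrank hli hcard) s
  have hrepr : ∀ (x : Fin m → F) (t : Fin m), ∑ j, x j * w t j = b.repr x t := by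
    intro x t
    conv_lhs => rw [← b.sum_repr x]
    have : ∀ s : Fin m, (b.repr x) s • b s = (b.repr x) s • w s := fun s => by rw [hb]
    rw [Finset.sum_congr rfl fun s _ => this s]
    exact hdot _ t
  -- the e-inner product of v a with v bb
  have hpow : ∀ (bb : ℕ) (j : Fin m), (v bb j) ^ q ^ e = v (bb + e) j := by
    intro bb j
    show (α j ^ q ^ bb) ^ q ^ e = α j ^ q ^ (bb + e)
    rw [← pow_mul, ← pow_add]
  have hdote : ∀ (a bb : ℕ) (ha : a < m),
      ∑ j, v a j * (v bb j) ^ q ^ e = if a = (bb + e) % m then (1:F) else 0 := by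
    intro a bb ha
    have h1 : ∀ j, v a j * (v bb j) ^ q ^ e = v a j * v ((bb + e) % m) j := by
      intro j; rw [hpow, ← hvmod]
    rw [Finset.sum_congr rfl fun j _ => h1 j]
    have h2 := horth ⟨a, ha⟩ ⟨(bb + e) % m, Nat.mod_lt _ hm⟩
    simp only [hw] at h2
    rw [h2]
    simp [Fin.mk.injEq]
  -- description of gab
  have hgab : gab q k α = Submodule.span F (w '' {s : Fin m | (s:ℕ) < k}) := by
    unfold gab
    congr 1
    ext x
    constructor
    · rintro ⟨i, rfl⟩
      exact ⟨⟨(i:ℕ), lt_of_lt_of_le i.2 hk⟩, i.2, rfl⟩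
    · rintro ⟨s, hs, rfl⟩
      exact ⟨⟨(s:ℕ), hs⟩, rfl⟩
  set Sset : Set (Fin m) := {s : Fin m | e + k - m ≤ (s:ℕ) ∧ (s:ℕ) < e} with hSset
  -- Frobenius additivity
  have hfrob : ∀ a c : F, (a + c) ^ q ^ e = a ^ q ^ e + c ^ q ^ e := by
    obtain ⟨p, n, hpp, hn, hpn⟩ := hq
    have hp' : p.Prime := Nat.prime_iff.mpr hpp
    haveI : Fact p.Prime := ⟨hp'⟩
    have hcharK : CharP K p := by
      obtain ⟨t, htp, ht⟩ := FiniteField.card K (ringChar K)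
      have h1 : p ∣ ringChar K ^ (t : ℕ) := by
        rw [← ht, hK, ← hpn]; exact dvd_pow_self p hn.ne'
      have h2 : p = ringChar K :=
        ((Nat.prime_dvd_prime_iff_eq hp' htp).mp (hp'.dvd_of_dvd_pow h1))
      rw [h2]; exact ringChar.charP K
    haveI := hcharK
    haveI : CharP F p := charP_of_injective_algebraMap' K p
    intro a c
    have h3 : q ^ e = p ^ (n * e) := by rw [← hpn, pow_mul]
    rw [h3]
    exact add_pow_char_pow a c p (n * e)
  have himg : w '' {s : Fin m | (s:ℕ) < k} = b '' {s : Fin m | (s:ℕ) < k} :=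
    Set.image_congr fun s _ => (hb s).symm
  have hwb : Sset → True := fun _ => trivial
  have hmain : gab q k α ⊓ galoisDual q e (gab q k α) = Submodule.span F (b '' Sset) := by
    apply le_antisymm
    · rintro x ⟨hx1, hx2⟩
      rw [Module.Basis.mem_span_image]
      intro t ht
      simp only [Finset.mem_coe, Finsupp.mem_support_iff] at ht
      have hkey : ∀ b' : ℕ, b' < k → b.repr x ⟨(b' + e) % m, Nat.mod_lt _ hm⟩ = 0 := by
        intro b' hb'
        have hmem : v b' ∈ gab q k α := Submodule.subset_span ⟨⟨b', hb'⟩, rfl⟩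
        have h0 := hx2 (v b') hmem
        have h1 : ∀ i, x i * (v b' i) ^ q ^ e
            = x i * w ⟨(b' + e) % m, Nat.mod_lt _ hm⟩ i := by
          intro i
          rw [hpow]
          have := hvmod (b' + e)
          rw [this]
        rw [Finset.sum_congr rfl fun i _ => h1 i, hrepr] at h0
        exact h0
      have htk : (t:ℕ) < k := by
        rw [hgab, himg] at hx1
        rw [SetLike.mem_coe, Module.Basis.mem_span_image] at hx1
        exact hx1 (Finset.mem_coe.mpr (Finsupp.mem_support_iff.mpr ht))
      have hte : (t:ℕ) < e := by
        by_contra hcon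
        push_neg at hcon
        have hb' : (t:ℕ) - e < k := by omega
        have h0 := hkey ((t:ℕ) - e) hb'
        have heq : (⟨((t:ℕ) - e + e) % m, Nat.mod_lt _ hm⟩ : Fin m) = t := by
          apply Fin.ext
          show ((t:ℕ) - e + e) % m = (t:ℕ)
          have h8 : (t:ℕ) - e + e = (t:ℕ) := by omega
          rw [h8]
          exact Nat.mod_eq_of_lt t.2
        rw [heq] at h0
        exact ht h0
      have hge : e + k - m ≤ (t:ℕ) := by
        by_contra hcon
        push_neg at hcon
        have hb' : (t:ℕ) + m - e < k := by omega
        have h0 := hkey ((t:ℕ) + m - e) hb'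
        have heq : (⟨((t:ℕ) + m - e + e) % m, Nat.mod_lt _ hm⟩ : Fin m) = t := by
          apply Fin.ext
          show ((t:ℕ) + m - e + e) % m = (t:ℕ)
          have h8 : (t:ℕ) + m - e + e = (t:ℕ) + m := by omega
          rw [h8, Nat.add_mod_right]
          exact Nat.mod_eq_of_lt t.2
        rw [heq] at h0
        exact ht h0
      exact ⟨hge, hte⟩
    · rw [Submodule.span_le]
      rintro x ⟨s, hs, rfl⟩
      obtain ⟨hs1, hs2⟩ := hs
      have hsk : (s:ℕ) < k := by omega
      constructor
      · rw [hgab]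
        apply Submodule.subset_span
        rw [hb]
        exact ⟨s, hsk, rfl⟩
      · intro c hc
        show ∑ i, b s i * c i ^ q ^ e = 0
        unfold gab at hc
        induction hc using Submodule.span_induction with
        | mem c hcmem =>
          obtain ⟨i, rfl⟩ := hcmem
          have h0 := hdote (s:ℕ) (i:ℕ) s.2
          have h1 : ∀ j, b s j * v (i:ℕ) j ^ q ^ e = v (s:ℕ) j * v (i:ℕ) j ^ q ^ e := by
            intro j; rw [hb]
          rw [Finset.sum_congr rfl fun j _ => h1 j, h0]
          have hik : (i:ℕ) < k := i.2
          have h5 : (s:ℕ) ≠ ((i:ℕ) + e) % m := by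
            have h6 : ((i:ℕ) + e) % m = if (i:ℕ) + e < m then (i:ℕ) + e else (i:ℕ) + e - m := by
              split
              · next h7 => exact Nat.mod_eq_of_lt h7
              · next h7 =>
                push_neg at h7
                rw [Nat.mod_eq_sub_mod h7, Nat.mod_eq_of_lt (by omega)]
            rw [h6]
            split <;> omega
          simp [h5]
        | zero =>
          simp [zero_pow (show q ^ e ≠ 0 by positivity)]
        | add c d _ _ hc1 hd1 =>
          have h1 : ∀ j, b s j * (c + d) j ^ q ^ e
              = b s j * c j ^ q ^ e + b s j * d j ^ q ^ e := by
            intro j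
            rw [Pi.add_apply, hfrob, mul_add]
          rw [Finset.sum_congr rfl fun j _ => h1 j, Finset.sum_add_distrib, hc1, hd1, add_zero]
        | smul r c _ hc1 =>
          have h1 : ∀ j, b s j * (r • c) j ^ q ^ e = r ^ q ^ e * (b s j * c j ^ q ^ e) := by
            intro j
            rw [Pi.smul_apply, smul_eq_mul, mul_pow]
            ring
          rw [Finset.sum_congr rfl fun j _ => h1 j, ← Finset.mul_sum, hc1, mul_zero]
  rw [hmain]
  have hliS : LinearIndependent F ((↑) : (b '' Sset) → (Fin m → F)) := by
    have h1 : LinearIndependent F (fun s : Sset => b s) :=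
      b.linearIndependent.comp _ Subtype.val_injective
    exact LinearIndepOn.id_image (v := ⇑b) (s := Sset) h1
  haveI : Fintype ↥(b '' Sset) := Set.Finite.fintype (Set.toFinite _)
  rw [finrank_span_set_eq_card hliS]
  rw [Set.toFinset_image, Finset.card_image_of_injective _ b.injective]
  have himage2 : Sset.toFinset.image (Fin.val) = Finset.Ico (e + k - m) e := by
    ext a
    simp only [Finset.mem_image, Set.mem_toFinset, Finset.mem_Ico]
    constructor
    · rintro ⟨s, hs, rfl⟩
      exact hs
    · intro ha
      exact ⟨⟨a, by omega⟩, ha, rfl⟩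
  have hbij : Sset.toFinset.card = (Finset.Ico (e + k - m) e).card := by
    rw [← himage2, Finset.card_image_of_injective _ Fin.val_injective]
  rw [hbij, Nat.card_Ico]
  omega
end

section
/- Let α be a self-dual basis of F_{q^m} over F_q, let 0 ≤ k ≤ m, and let e be an integer with k+1 ≤ e ≤ m−1. Then the F_{q^m}-dimension of the e-Galois hull of the Gabidulin code G_k(α) equals min(m−e, k). -/
open Polynomial in
lemma my_trace_formula (q m : ℕ) (hq : IsPrimePow q) (hm : 0 < m)
    (K F : Type) [Field K] [Field F] [Algebra K F] [Fintype K] [Fintype F]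
    (hK : Fintype.card K = q) (hF : Fintype.card F = q ^ m)
    (hrank : Module.finrank K F = m) (x : F) :
    algebraMap K F (Algebra.trace K F x) = ∑ a : Fin m, x ^ q ^ (a : ℕ) := by
  classical
  obtain ⟨p, s, hp, hs, rfl⟩ := hq
  have hpp : p.Prime := Nat.prime_iff.mpr hp
  haveI : Fact p.Prime := ⟨hpp⟩
  have hq2 : 2 ≤ p ^ s := hpp.two_le.trans (Nat.le_self_pow hs.ne' p)
  -- char of F is p
  haveI : CharP F (ringChar F) := ringChar.charP F
  obtain ⟨n, hp', hcard⟩ := FiniteField.card F (ringChar F)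
  have hpeq : ringChar F = p := by
    have hdvd : p ∣ ringChar F ^ (n : ℕ) := by
      rw [← hcard, hF, ← pow_mul]
      exact dvd_pow_self p (by positivity)
    exact ((Nat.prime_dvd_prime_iff_eq hpp hp').mp (hpp.dvd_of_dvd_pow hdvd)).symm
  haveI : CharP F p := hpeq ▸ ringChar.charP F
  -- the Frobenius algebra equivalence x ↦ x ^ q
  have hfix : ∀ c : K, algebraMap K F c ^ p ^ s = algebraMap K F c := by
    intro c
    rw [← map_pow, ← hK, FiniteField.pow_card]
  let σhom : F →ₐ[K] F :=
    { iterateFrobenius F p s with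
      commutes' := fun c => by simpa [iterateFrobenius_def] using hfix c }
  have hσhom : ∀ y : F, σhom y = y ^ p ^ s := fun y => rfl
  let σ : F ≃ₐ[K] F :=
    AlgEquiv.ofBijective σhom
      ((Finite.injective_iff_bijective).mp (RingHom.injective σhom.toRingHom))
  have hσ : ∀ y : F, σ y = y ^ p ^ s := fun y => rfl
  have hσpow : ∀ (n : ℕ) (y : F), (σ ^ n) y = y ^ (p ^ s) ^ n := by
    intro n
    induction n with
    | zero => intro y; simp
    | succ n ih =>
      intro y
      rw [pow_succ, AlgEquiv.mul_apply, hσ, ih, ← pow_mul, mul_comm, ← pow_succ]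
  -- no nontrivial small power of σ is the identity
  have hone : ∀ d : ℕ, 0 < d → d < m → σ ^ d ≠ 1 := by
    intro d hd hdm h1
    have hall : ∀ y : F, y ^ (p ^ s) ^ d = y := by
      intro y
      have := DFunLike.congr_fun h1 y
      rwa [hσpow] at this
    set P : F[X] := X ^ (p ^ s) ^ d - X with hP
    have hPne : P ≠ 0 := by
      intro h
      have h2 : (X : F[X]) ^ (p ^ s) ^ d = X := by rwa [hP, sub_eq_zero] at h
      have := congrArg Polynomial.natDegree h2
      rw [natDegree_X_pow, natDegree_X] at this
      have : 2 ≤ (p ^ s) ^ d := hq2.trans (Nat.le_self_pow hd.ne' _)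
      omega
    have hdeg : P.natDegree ≤ (p ^ s) ^ d := by
      refine (natDegree_sub_le _ _).trans ?_
      simp only [natDegree_X_pow, natDegree_X]
      exact max_le le_rfl (Nat.one_le_pow _ _ (by omega))
    have hsub : (Finset.univ : Finset F) ⊆ P.roots.toFinset := by
      intro y _
      rw [Multiset.mem_toFinset, mem_roots hPne]
      simp [hP, IsRoot, hall y]
    have hcardle : Fintype.card F ≤ (p ^ s) ^ d := by
      calc Fintype.card F = (Finset.univ : Finset F).card := rfl
        _ ≤ P.roots.toFinset.card := Finset.card_le_card hsub
        _ ≤ Multiset.card P.roots := P.roots.toFinset_card_le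
        _ ≤ P.natDegree := P.card_roots'
        _ ≤ (p ^ s) ^ d := hdeg
    rw [hF] at hcardle
    have : (p ^ s) ^ d < (p ^ s) ^ m := Nat.pow_lt_pow_right (by omega) hdm
    omega
  -- E is a bijection from Fin m to the automorphism group
  haveI : FiniteDimensional K F := Module.Finite.of_basis (Module.finBasis K F)
  set E : Fin m → (F ≃ₐ[K] F) := fun a => σ ^ (a : ℕ) with hE
  have hEinj : Function.Injective E := by
    intro a b hab
    wlog hab2 : (a : ℕ) ≤ (b : ℕ) generalizing a b
    · exact (this hab.symm (by omega)).symm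
    rcases eq_or_lt_of_le hab2 with h | h
    · exact Fin.ext h
    · exfalso
      have hab' : σ ^ (a : ℕ) = σ ^ (b : ℕ) := hab
      have h2 : σ ^ (a : ℕ) * σ ^ ((b : ℕ) - (a : ℕ)) = σ ^ (a : ℕ) * 1 := by
        rw [mul_one, ← pow_add, hab']
        congr 1
        omega
      exact hone _ (by omega) (by omega) (mul_left_cancel h2)
  have hEbij : Function.Bijective E := by
    rw [Fintype.bijective_iff_injective_and_card]
    exact ⟨hEinj, by rw [Fintype.card_fin, Fintype.card_eq_nat_card, IsGalois.card_aut_eq_finrank, hrank]⟩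
  rw [trace_eq_sum_automorphisms]
  exact (Fintype.sum_bijective E hEbij _ _ (fun a => (hσpow a x).symm)).symm

lemma my_add_pow_q_pow (q m : ℕ) (hq : IsPrimePow q) (hm : 0 < m)
    (F : Type) [Field F] [Fintype F] (hF : Fintype.card F = q ^ m)
    (x y : F) (n : ℕ) : (x + y) ^ q ^ n = x ^ q ^ n + y ^ q ^ n := by
  obtain ⟨p, s, hp, hs, rfl⟩ := hq
  have hpp : p.Prime := Nat.prime_iff.mpr hp
  haveI : Fact p.Prime := ⟨hpp⟩
  haveI : CharP F (ringChar F) := ringChar.charP F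
  obtain ⟨n', hp', hcard⟩ := FiniteField.card F (ringChar F)
  have hpeq : ringChar F = p := by
    have hdvd : p ∣ ringChar F ^ (n' : ℕ) := by
      rw [← hcard, hF, ← pow_mul]
      exact dvd_pow_self p (by positivity)
    exact ((Nat.prime_dvd_prime_iff_eq hpp hp').mp (hpp.dvd_of_dvd_pow hdvd)).symm
  haveI : CharP F p := hpeq ▸ ringChar.charP F
  rw [← pow_mul]
  exact add_pow_char_pow ..

lemma my_linIndep_of_orthonormal (F : Type) [Field F] (m r : ℕ)
    (u : Fin r → (Fin m → F))
    (h : ∀ a b, ∑ j, u a j * u b j = if a = b then 1 else 0) :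
    LinearIndependent F u := by
  rw [Fintype.linearIndependent_iff]
  intro c hc b
  have h2 : ∑ j, (∑ a, c a • u a) j * u b j = c b := by
    simp only [Finset.sum_apply, Pi.smul_apply, smul_eq_mul, Finset.sum_mul]
    rw [Finset.sum_comm]
    simp_rw [mul_assoc, ← Finset.mul_sum, h]
    simp
  rw [hc] at h2
  simpa using h2.symm

open Matrix in
lemma my_orthonormal (q m : ℕ) (hq : IsPrimePow q) (hm : 0 < m)
    (K F : Type) [Field K] [Field F] [Algebra K F] [Fintype K] [Fintype F]
    (hK : Fintype.card K = q) (hF : Fintype.card F = q ^ m)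
    (hrank : Module.finrank K F = m)
    (α : Fin m → F)
    (hsd : ∀ i j, Algebra.trace K F (α i * α j) = if i = j then 1 else 0)
    (a b : Fin m) :
    ∑ t, α t ^ q ^ (a : ℕ) * α t ^ q ^ (b : ℕ) = if a = b then 1 else 0 := by
  classical
  set M : Matrix (Fin m) (Fin m) F := Matrix.of fun i c => α i ^ q ^ (c : ℕ) with hM
  have h1 : M * Mᵀ = 1 := by
    ext i j
    rw [Matrix.mul_apply]
    simp only [hM, Matrix.of_apply, Matrix.transpose_apply]
    calc ∑ c : Fin m, α i ^ q ^ (c:ℕ) * α j ^ q ^ (c:ℕ)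
        = ∑ c : Fin m, (α i * α j) ^ q ^ (c:ℕ) := by simp [mul_pow]
      _ = algebraMap K F (Algebra.trace K F (α i * α j)) :=
          (my_trace_formula q m hq hm K F hK hF hrank _).symm
      _ = (1 : Matrix (Fin m) (Fin m) F) i j := by
          rw [hsd]
          by_cases h : i = j <;> simp [h, Matrix.one_apply]
  have h2 : Mᵀ * M = 1 := mul_eq_one_comm.mp h1
  have h3 := congrFun (congrFun h2 a) b
  rw [Matrix.mul_apply] at h3
  simp only [hM, Matrix.of_apply, Matrix.transpose_apply, Matrix.one_apply] at h3
  exact h3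

/-- For a self-dual basis `α` and `k + 1 ≤ e ≤ m - 1`, the `e`-Galois hull of `G_k(α)`
has dimension `min (m - e) k`. -/
theorem hull_dim_gab_of_gt
    (q m : ℕ) (hq : IsPrimePow q) (hm : 0 < m)
    (K F : Type) [Field K] [Field F] [Algebra K F] [Fintype K] [Fintype F]
    (hK : Fintype.card K = q) (hF : Fintype.card F = q ^ m)
    (α : Fin m → F) (hα : ∃ b : Module.Basis (Fin m) K F, ⇑b = α)
    (hsd : ∀ i j, Algebra.trace K F (α i * α j) = if i = j then 1 else 0)
    (k e : ℕ) (hk : k ≤ m) (he : k + 1 ≤ e) (hem : e ≤ m - 1) :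
    Module.finrank F ↥(gab q k α ⊓ galoisDual q e (gab q k α)) = min (m - e) k := by
  classical
  obtain ⟨bb, hbb⟩ := hα
  have hrank : Module.finrank K F = m := by
    rw [Module.finrank_eq_card_basis bb, Fintype.card_fin]
  have hq2 : 2 ≤ q := hq.two_le
  have hem' : e < m := by omega
  set v : ℕ → (Fin m → F) := fun i => fun j => α j ^ q ^ i with hv
  have horto : ∀ a b : ℕ, a < m → b < m →
      ∑ t, v a t * v b t = if a = b then 1 else 0 := by
    intro a b ha hbm
    have := my_orthonormal q m hq hm K F hK hF hrank α hsd ⟨a, ha⟩ ⟨b, hbm⟩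
    simpa [hv, Fin.mk.injEq] using this
  have hstep : ∀ (x : F) (u : ℕ), x ^ q ^ (m + u) = x ^ q ^ u := by
    intro x u
    rw [pow_add, mul_comm, pow_mul, ← hF, FiniteField.pow_card]
  have hred : ∀ (x : F) (n r : ℕ), x ^ q ^ (m * n + r) = x ^ q ^ r := by
    intro x n r
    induction n with
    | zero => simp
    | succ n ih =>
      have h : m * (n + 1) + r = m + (m * n + r) := by ring
      rw [h, hstep, ih]
  have hmod : ∀ (x : F) (a : ℕ), x ^ q ^ a = x ^ q ^ (a % m) := by
    intro x a
    conv_lhs => rw [← Nat.div_add_mod a m]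
    exact hred x (a / m) (a % m)
  have hadd : ∀ x y : F, (x + y) ^ q ^ e = x ^ q ^ e + y ^ q ^ e :=
    fun x y => my_add_pow_q_pow q m hq hm F hF x y e
  have hmem_dual : ∀ (C : Submodule F (Fin m → F)) (x : Fin m → F),
      x ∈ galoisDual q e C ↔ ∀ c ∈ C, ∑ i, x i * c i ^ q ^ e = 0 := fun C x => Iff.rfl
  have hgen : ∀ j : Fin k, v (j : ℕ) ∈ gab q k α := fun j => Submodule.subset_span ⟨j, rfl⟩
  have hdual_mem : ∀ x : Fin m → F,
      (∀ j : Fin k, ∑ t, x t * (v (j : ℕ) t) ^ q ^ e = 0) →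
      x ∈ galoisDual q e (gab q k α) := by
    intro x hx
    rw [hmem_dual]
    intro c hc
    induction hc using Submodule.span_induction with
    | mem c hcmem => obtain ⟨j, rfl⟩ := hcmem; exact hx j
    | zero => simp [zero_pow (show q ^ e ≠ 0 by positivity)]
    | add c d hcm hdm hc hd =>
      simp only [Pi.add_apply]
      simp_rw [hadd, mul_add, Finset.sum_add_distrib]
      rw [hc, hd, add_zero]
    | smul r c hcm hc =>
      simp only [Pi.smul_apply, smul_eq_mul, mul_pow]
      simp_rw [show ∀ t, x t * (r ^ q ^ e * c t ^ q ^ e) = r ^ q ^ e * (x t * c t ^ q ^ e) from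
        fun t => by ring]
      rw [← Finset.mul_sum, hc, mul_zero]
  have hvv : ∀ i j : ℕ, i < m →
      ∑ t, v i t * (v j t) ^ q ^ e = if i = (j + e) % m then 1 else 0 := by
    intro i j hi
    have h1 : ∀ t, (v j t) ^ q ^ e = v ((j + e) % m) t := by
      intro t
      show (α t ^ q ^ j) ^ q ^ e = α t ^ q ^ ((j + e) % m)
      rw [← pow_mul, ← pow_add, hmod]
    simp_rw [h1]
    exact horto i ((j + e) % m) hi (Nat.mod_lt _ hm)
  obtain ⟨d, hd⟩ : ∃ d, d = min (m - e) k := ⟨_, rfl⟩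
  obtain ⟨s, hs⟩ : ∃ s, s = k - d := ⟨_, rfl⟩
  have hdk : d ≤ k := hd ▸ min_le_right _ _
  have hdme : d ≤ m - e := hd ▸ min_le_left _ _
  have hdsk : s + d = k := by omega
  have hcase : d = m - e ∨ d = k := by
    rw [hd]
    rcases le_total (m - e) k with h | h
    · exact Or.inl (min_eq_left h)
    · exact Or.inr (min_eq_right h)
  have hjmod : ∀ j : ℕ, j < k → m ≤ j + e → (j + e) % m = j + e - m := by
    intro j hj hje
    rw [Nat.mod_eq_sub_mod hje, Nat.mod_eq_of_lt (by omega)]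
  let w : Fin d → (Fin m → F) := fun t => v (s + (t : ℕ))
  have hwind : LinearIndependent F w := by
    apply my_linIndep_of_orthonormal
    intro a b'
    have ha := a.isLt
    have hb' := b'.isLt
    show ∑ j, v (s + (a : ℕ)) j * v (s + (b' : ℕ)) j = _
    rw [horto _ _ (by omega) (by omega)]
    by_cases hab : a = b'
    · simp [hab]
    · have hab' : (a : ℕ) ≠ (b' : ℕ) := fun h => hab (Fin.ext h)
      rw [if_neg (by omega), if_neg hab]
  have hsub1 : Submodule.span F (Set.range w) ≤ gab q k α ⊓ galoisDual q e (gab q k α) := by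
    rw [Submodule.span_le]
    rintro _ ⟨t, rfl⟩
    have htlt := t.isLt
    refine Submodule.mem_inf.mpr ⟨hgen ⟨s + (t : ℕ), by omega⟩, ?_⟩
    apply hdual_mem
    intro j
    have hjlt := j.isLt
    show ∑ tt, v (s + (t : ℕ)) tt * (v (j : ℕ) tt) ^ q ^ e = 0
    rw [hvv _ _ (by omega), if_neg]
    rcases lt_or_ge ((j : ℕ) + e) m with hje | hje
    · rw [Nat.mod_eq_of_lt hje]; omega
    · rw [hjmod _ hjlt hje]
      rcases hcase with h | h <;> omega
  have hsub2 : gab q k α ⊓ galoisDual q e (gab q k α) ≤ Submodule.span F (Set.range w) := by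
    rintro x ⟨hx1, hx2⟩
    obtain ⟨c, hc⟩ := (Submodule.mem_span_range_iff_exists_fun F).mp hx1
    have hinner : ∀ j : ℕ, (hj : j < k) →
        ∑ i : Fin k, c i * (if (i : ℕ) = (j + e) % m then 1 else 0) = 0 := by
      intro j hj
      have h0 := (hmem_dual _ x).mp hx2 (v j) (hgen ⟨j, hj⟩)
      rw [← hc] at h0
      have hcalc : ∑ tt, (∑ i : Fin k, c i • v (i : ℕ)) tt * (v j tt) ^ q ^ e
          = ∑ i : Fin k, c i * (if (i : ℕ) = (j + e) % m then 1 else 0) := by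
        simp only [Finset.sum_apply, Pi.smul_apply, smul_eq_mul, Finset.sum_mul]
        rw [Finset.sum_comm]
        simp_rw [mul_assoc, ← Finset.mul_sum]
        refine Finset.sum_congr rfl fun i _ => ?_
        rw [hvv (i : ℕ) j (by omega)]
      rw [hcalc] at h0
      exact h0
    have hzero : ∀ i : Fin k, (i : ℕ) < s → c i = 0 := by
      intro i hi
      have hilt := i.isLt
      have hdme' : d = m - e := by
        rcases hcase with h | h
        · exact h
        · omega
      have hjk : (i : ℕ) + (m - e) < k := by omega
      have h1 := hinner ((i : ℕ) + (m - e)) hjk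
      have hmodj : ((i : ℕ) + (m - e) + e) % m = (i : ℕ) := by
        have hje : (i : ℕ) + (m - e) + e = (i : ℕ) + m := by omega
        rw [hje, Nat.add_mod_right, Nat.mod_eq_of_lt (by omega)]
      rw [hmodj] at h1
      have hsum : ∑ i' : Fin k, c i' * (if (i' : ℕ) = (i : ℕ) then 1 else 0) = c i := by
        rw [Finset.sum_eq_single i]
        · simp
        · intro b' _ hb'
          rw [if_neg (fun h => hb' (Fin.ext h)), mul_zero]
        · intro h; exact absurd (Finset.mem_univ i) h
      rw [hsum] at h1
      exact h1
    rw [← hc]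
    apply Submodule.sum_mem
    intro i _
    have hilt := i.isLt
    by_cases hi : (i : ℕ) < s
    · rw [hzero i hi, zero_smul]
      exact Submodule.zero_mem _
    · apply Submodule.smul_mem
      apply Submodule.subset_span
      refine ⟨⟨(i : ℕ) - s, by omega⟩, ?_⟩
      have hss : s + ((i : ℕ) - s) = (i : ℕ) := by omega
      show v (s + ((i : ℕ) - s)) = v (i : ℕ)
      rw [hss]
  have heq : gab q k α ⊓ galoisDual q e (gab q k α) = Submodule.span F (Set.range w) :=
    le_antisymm hsub2 hsub1
  rw [heq, finrank_span_eq_card hwind, Fintype.card_fin, ← hd]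
end

section
/- Let α be a self-dual basis of F_{q^m} over F_q, let k be an integer with 1 ≤ k and 2k ≤ m, and let 0 ≤ e ≤ m−1. Then the Gabidulin code G_k(α) is e-Galois self-orthogonal (i.e., G_k(α) ⊆ G_k(α)^{⊥_e}) if and only if e = k or k+1 ≤ e ≤ m−k. -/
section Aux

variable {q m : ℕ} {K F : Type} [Field K] [Field F] [Algebra K F] [Fintype K] [Fintype F]

/-- From the cardinality of `K` we extract the characteristic data. -/
lemma aux_char (hq : IsPrimePow q) (hK : Fintype.card K = q) :
    ∃ p s : ℕ, p.Prime ∧ 0 < s ∧ p ^ s = q ∧ CharP K p ∧ CharP F p := by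
  obtain ⟨p, s, hp, hs, hpq⟩ := hq
  have hp' : p.Prime := hp.nat_prime
  haveI : CharP K (ringChar K) := ringChar.charP K
  have hr : (ringChar K).Prime := CharP.char_is_prime K _
  haveI := Fact.mk hr
  obtain ⟨n, _, hn⟩ := FiniteField.card K (ringChar K)
  have hpr : p = ringChar K := by
    have h1 : p ∣ (ringChar K) ^ (n : ℕ) := by
      rw [← hn, hK, ← hpq]
      exact dvd_pow_self p hs.ne'
    exact (Nat.prime_dvd_prime_iff_eq hp' hr).mp (hp'.dvd_of_dvd_pow h1)
  haveI : CharP K p := by rw [hpr]; exact ringChar.charP K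
  haveI : CharP F p := charP_of_injective_algebraMap' (A := F) K p
  exact ⟨p, s, hp', hs, hpq, inferInstance, inferInstance⟩

/-- Trace of a finite field extension is the sum of the `q`-power maps. -/
lemma aux_trace (hq : IsPrimePow q) (hm : 0 < m)
    (hK : Fintype.card K = q) (hF : Fintype.card F = q ^ m)
    (b : Module.Basis (Fin m) K F) (x : F) :
    algebraMap K F (Algebra.trace K F x) = ∑ i : Fin m, x ^ q ^ (i : ℕ) := by
  classical
  obtain ⟨p, s, hp, hs, hpq, hcK, hcF⟩ := aux_char (F := F) hq hK
  haveI := Fact.mk hp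
  haveI : CharP K p := hcK
  haveI : CharP F p := hcF
  haveI : FiniteDimensional K F := Module.Finite.of_basis b
  have hq2 : 2 ≤ q := hq.two_le
  -- the Frobenius `x ↦ x ^ q` as a `K`-algebra automorphism of `F`
  have hcomm : ∀ a : K, iterateFrobenius F p s (algebraMap K F a) = algebraMap K F a := by
    intro a
    rw [iterateFrobenius_def, ← map_pow, hpq, ← hK, FiniteField.pow_card]
  let frobA : F →ₐ[K] F := ⟨iterateFrobenius F p s, hcomm⟩
  have hbij : Function.Bijective frobA :=
    Finite.injective_iff_bijective.mp (frobA.toRingHom.injective)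
  let Frob : F ≃ₐ[K] F := AlgEquiv.ofBijective frobA hbij
  have hFrob : ∀ y : F, Frob y = y ^ q := by
    intro y
    show frobA y = y ^ q
    show iterateFrobenius F p s y = y ^ q
    rw [iterateFrobenius_def, hpq]
  have hpow : ∀ (i : ℕ) (y : F), (Frob ^ i) y = y ^ q ^ i := by
    intro i
    induction i with
    | zero => intro y; simp
    | succ n ih =>
      intro y
      rw [pow_succ, AlgEquiv.mul_apply, hFrob, ih, ← pow_mul, pow_succ']
  -- injectivity of `i ↦ Frob ^ i` on `Fin m`
  have key : ∀ a c : ℕ, a < c → c < m → Frob ^ a ≠ Frob ^ c := by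
    intro a c hac hcm heq
    obtain ⟨g, hg⟩ := IsCyclic.exists_generator (α := Fˣ)
    have horder : orderOf g = q ^ m - 1 := by
      rw [orderOf_eq_card_of_forall_mem_zpowers hg, Nat.card_eq_fintype_card, Fintype.card_units, hF]
    have h1 : (g : F) ^ q ^ a = (g : F) ^ q ^ c := by
      have := DFunLike.congr_fun heq (g : F)
      rwa [hpow, hpow] at this
    have hinja : Function.Injective fun y : F => y ^ q ^ a := by
      have : (fun y : F => y ^ q ^ a) = ⇑(Frob ^ a) := by
        funext y; rw [hpow]
      rw [this]
      exact (Frob ^ a).injective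
    have h2 : (g : F) ^ q ^ (c - a) = (g : F) := by
      apply hinja
      show ((g : F) ^ q ^ (c - a)) ^ q ^ a = (g : F) ^ q ^ a
      rw [← pow_mul, ← pow_add, Nat.sub_add_cancel hac.le, h1]
    have h3 : g ^ q ^ (c - a) = g := Units.ext (by push_cast; exact h2)
    have hqpos : 1 ≤ q ^ (c - a) := Nat.one_le_pow _ _ (by omega)
    have h4 : g ^ (q ^ (c - a) - 1) = 1 := by
      have hrw : q ^ (c - a) = (q ^ (c - a) - 1) + 1 := by omega
      rw [hrw, pow_succ] at h3
      exact mul_eq_right.mp h3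
    have h5 : q ^ m - 1 ∣ q ^ (c - a) - 1 := horder ▸ orderOf_dvd_of_pow_eq_one h4
    have h6 : 2 ≤ q ^ (c - a) := by
      calc 2 ≤ q := hq2
      _ = q ^ 1 := (pow_one q).symm
      _ ≤ q ^ (c - a) := Nat.pow_le_pow_right (by omega) (by omega)
    have h8 : q ^ (c - a) < q ^ m := Nat.pow_lt_pow_right (by omega) (by omega)
    have h7 : q ^ m - 1 ≤ q ^ (c - a) - 1 := Nat.le_of_dvd (by omega) h5
    omega
  have hginj : Function.Injective fun i : Fin m => Frob ^ (i : ℕ) := by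
    intro i j hij
    by_contra hne
    rcases lt_or_gt_of_ne (fun h : (i : ℕ) = (j : ℕ) => hne (Fin.ext h)) with h | h
    · exact key i j h j.isLt hij
    · exact key j i h i.isLt hij.symm
  have hcard : Fintype.card (F ≃ₐ[K] F) = m := by
    rw [← Nat.card_eq_fintype_card, IsGalois.card_aut_eq_finrank, Module.finrank_eq_card_basis b, Fintype.card_fin]
  have hbij2 : Function.Bijective fun i : Fin m => Frob ^ (i : ℕ) :=
    (Fintype.bijective_iff_injective_and_card _).mpr ⟨hginj, by simp [hcard]⟩
  rw [trace_eq_sum_automorphisms]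
  exact (Fintype.sum_bijective _ hbij2 _ _ (fun i => (hpow i x).symm)).symm

open Matrix in
/-- Orthonormality of the "columns" of the Moore matrix of a self-dual basis. -/
lemma aux_delta (hq : IsPrimePow q) (hm : 0 < m)
    (hK : Fintype.card K = q) (hF : Fintype.card F = q ^ m)
    {α : Fin m → F} (b : Module.Basis (Fin m) K F)
    (hsd : ∀ i j, Algebra.trace K F (α i * α j) = if i = j then 1 else 0)
    (a c : Fin m) :
    ∑ j : Fin m, α j ^ q ^ (a : ℕ) * α j ^ q ^ (c : ℕ) = if a = c then (1 : F) else 0 := by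
  set M := Matrix.of (fun (i j : Fin m) => α j ^ q ^ (i : ℕ)) with hM
  have h1 : Mᵀ * M = 1 := by
    ext i j
    rw [Matrix.mul_apply, Matrix.one_apply]
    have hterm : ∀ s : Fin m, Mᵀ i s * M s j = (α i * α j) ^ q ^ (s : ℕ) := by
      intro s
      simp only [hM, Matrix.transpose_apply, Matrix.of_apply, mul_pow]
    rw [Finset.sum_congr rfl fun s _ => hterm s, ← aux_trace hq hm hK hF b (α i * α j), hsd i j]
    split <;> simp
  have h2 := mul_eq_one_comm.mpr h1
  have h3 := congrFun (congrFun h2 a) c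
  rw [Matrix.mul_apply, Matrix.one_apply] at h3
  rw [← h3]
  apply Finset.sum_congr rfl
  intro j _
  simp [hM, Matrix.transpose_apply, Matrix.of_apply]

lemma aux_pow_reduce (hF : Fintype.card F = q ^ m) (x : F) (d r : ℕ) :
    x ^ q ^ (m * d + r) = x ^ q ^ r := by
  induction d with
  | zero => simp
  | succ n ih =>
    have hexp : m * (n + 1) + r = (m * n + r) + m := by ring
    rw [hexp, pow_add, pow_mul, ← hF, FiniteField.pow_card, ih]

lemma aux_pow_mod (hF : Fintype.card F = q ^ m) (x : F) (a : ℕ) :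
    x ^ q ^ a = x ^ q ^ (a % m) := by
  conv_lhs => rw [← Nat.div_add_mod a m]
  exact aux_pow_reduce hF x (a / m) (a % m)

/-- The key inner-product computation for arbitrary natural exponents. -/
lemma aux_delta_nat (hq : IsPrimePow q) (hm : 0 < m)
    (hK : Fintype.card K = q) (hF : Fintype.card F = q ^ m)
    {α : Fin m → F} (b : Module.Basis (Fin m) K F)
    (hsd : ∀ i j, Algebra.trace K F (α i * α j) = if i = j then 1 else 0)
    (a c : ℕ) :
    ∑ j : Fin m, α j ^ q ^ a * α j ^ q ^ c = if a % m = c % m then (1 : F) else 0 := by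
  have h1 : ∀ j, α j ^ q ^ a = α j ^ q ^ (a % m) := fun j => aux_pow_mod hF _ a
  have h2 : ∀ j, α j ^ q ^ c = α j ^ q ^ (c % m) := fun j => aux_pow_mod hF _ c
  have ha : a % m < m := Nat.mod_lt _ hm
  have hc : c % m < m := Nat.mod_lt _ hm
  calc ∑ j : Fin m, α j ^ q ^ a * α j ^ q ^ c
      = ∑ j : Fin m, α j ^ q ^ ((⟨a % m, ha⟩ : Fin m) : ℕ) *
          α j ^ q ^ ((⟨c % m, hc⟩ : Fin m) : ℕ) := by
        apply Finset.sum_congr rfl; intro j _; rw [h1 j, h2 j]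
    _ = if (⟨a % m, ha⟩ : Fin m) = (⟨c % m, hc⟩ : Fin m) then (1 : F) else 0 :=
        aux_delta hq hm hK hF b hsd _ _
    _ = if a % m = c % m then (1 : F) else 0 := by
        simp [Fin.ext_iff]

end Aux

/-- For a self-dual basis `α` and `1 ≤ k` with `2k ≤ m`, the Gabidulin code `G_k(α)` is
`e`-Galois self-orthogonal if and only if `e = k` or `k + 1 ≤ e ≤ m - k`. -/
theorem gab_selfOrthogonal_iff
    (q m : ℕ) (hq : IsPrimePow q) (hm : 0 < m)
    (K F : Type) [Field K] [Field F] [Algebra K F] [Fintype K] [Fintype F]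
    (hK : Fintype.card K = q) (hF : Fintype.card F = q ^ m)
    (α : Fin m → F) (hα : ∃ b : Module.Basis (Fin m) K F, ⇑b = α)
    (hsd : ∀ i j, Algebra.trace K F (α i * α j) = if i = j then 1 else 0)
    (k e : ℕ) (hk1 : 1 ≤ k) (hk2 : 2 * k ≤ m) (he : e ≤ m - 1) :
    gab q k α ≤ galoisDual q e (gab q k α) ↔ (e = k ∨ (k + 1 ≤ e ∧ e ≤ m - k)) := by
  obtain ⟨b, hb⟩ := hα
  obtain ⟨p, s, hp, hs, hpq, hcK, hcF⟩ := aux_char (F := F) hq hK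
  haveI := Fact.mk hp
  haveI : CharP F p := hcF
  haveI : ExpChar F p := ExpChar.prime hp
  have hq2 : 2 ≤ q := hq.two_le
  have hkm : k ≤ m := by omega
  -- inner product of two generators
  have hip : ∀ i j : ℕ, ∑ t : Fin m, α t ^ q ^ i * (α t ^ q ^ j) ^ q ^ e
      = if i % m = (j + e) % m then (1 : F) else 0 := by
    intro i j
    have : ∀ t : Fin m, (α t ^ q ^ j) ^ q ^ e = α t ^ q ^ (j + e) := by
      intro t; rw [← pow_mul, ← pow_add]
    rw [Finset.sum_congr rfl fun t _ => by rw [this t]]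
    exact aux_delta_nat hq hm hK hF b hsd i (j + e)
  -- generators are in the code
  have hgen : ∀ i : Fin k, (fun j : Fin m => α j ^ q ^ (i : ℕ)) ∈ gab q k α := by
    intro i
    exact Submodule.subset_span ⟨i, rfl⟩
  constructor
  · -- forward direction
    intro H
    by_contra hcon
    have hrange : ¬ (k ≤ e ∧ e ≤ m - k) := by omega
    rcases not_and_or.mp hrange with h | h
    · -- e < k
      have hek : e < k := by omega
      have h1 : ∑ t : Fin m, α t ^ q ^ e * (α t ^ q ^ (0 : ℕ)) ^ q ^ e = 0 :=
        H (hgen ⟨e, hek⟩) _ (hgen ⟨0, by omega⟩)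
      rw [hip e 0] at h1
      simp only [Nat.zero_add, if_pos rfl] at h1
      exact one_ne_zero h1
    · -- m - k < e, i.e. e = m - d with 1 ≤ d < k
      have hd1 : 1 ≤ m - e := by omega
      have hdk : m - e < k := by omega
      have h1 : ∑ t : Fin m, α t ^ q ^ (0 : ℕ) * (α t ^ q ^ (m - e)) ^ q ^ e = 0 :=
        H (hgen ⟨0, by omega⟩) _ (hgen ⟨m - e, hdk⟩)
      rw [hip 0 (m - e)] at h1
      have hme : (m - e + e) = m := by omega
      rw [hme] at h1
      simp only [Nat.zero_mod, Nat.mod_self, if_pos rfl] at h1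
      exact one_ne_zero h1
  · -- backward direction
    intro H
    have hke : k ≤ e ∧ e ≤ m - k := by omega
    have hgab : gab q k α
        = Submodule.span F (Set.range fun i : Fin k => fun j : Fin m => α j ^ q ^ (i : ℕ)) := rfl
    rw [hgab, Submodule.span_le]
    rintro x ⟨i, rfl⟩
    intro c hc
    show ∑ t : Fin m, α t ^ q ^ (i : ℕ) * c t ^ q ^ e = 0
    induction hc using Submodule.span_induction with
    | mem c hcmem =>
      obtain ⟨j, rfl⟩ := hcmem
      show ∑ t : Fin m, α t ^ q ^ (i : ℕ) * (α t ^ q ^ (j : ℕ)) ^ q ^ e = 0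
      rw [hip (i : ℕ) (j : ℕ)]
      have hi : (i : ℕ) < k := i.isLt
      have hj : (j : ℕ) < k := j.isLt
      have hlt : (j : ℕ) + e < m := by omega
      have hne : (i : ℕ) % m ≠ ((j : ℕ) + e) % m := by
        rw [Nat.mod_eq_of_lt (by omega), Nat.mod_eq_of_lt hlt]
        omega
      rw [if_neg hne]
    | zero =>
      have hqe : q ^ e ≠ 0 := pow_ne_zero e (by omega)
      simp [zero_pow hqe]
    | add u v hu hv ihu ihv =>
      have : ∀ t : Fin m, α t ^ q ^ (i : ℕ) * ((u + v) t) ^ q ^ e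
          = α t ^ q ^ (i : ℕ) * (u t) ^ q ^ e + α t ^ q ^ (i : ℕ) * (v t) ^ q ^ e := by
        intro t
        have hqe : q ^ e = p ^ (s * e) := by rw [← hpq, pow_mul]
        rw [Pi.add_apply, hqe, add_pow_expChar_pow, mul_add]
      rw [Finset.sum_congr rfl fun t _ => this t, Finset.sum_add_distrib, ihu, ihv, add_zero]
    | smul r u hu ihu =>
      have : ∀ t : Fin m, α t ^ q ^ (i : ℕ) * ((r • u) t) ^ q ^ e
          = r ^ q ^ e * (α t ^ q ^ (i : ℕ) * (u t) ^ q ^ e) := by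
        intro t
        rw [Pi.smul_apply, smul_eq_mul, mul_pow]
        ring
      rw [Finset.sum_congr rfl fun t _ => this t, ← Finset.mul_sum, ihu, mul_zero]
end

section
/- Let m be even, let α be a self-dual basis of F_{q^m} over F_q, let k = m/2, and let 0 ≤ e ≤ m−1. Then the Gabidulin code G_k(α) is e-Galois self-dual (i.e., G_k(α) = G_k(α)^{⊥_e}) if and only if e = m/2. -/
theorem mem_galoisDual {F : Type*} [Field F] (q e : ℕ) {n : ℕ} (C : Submodule F (Fin n → F))
    (x : Fin n → F) : x ∈ galoisDual q e C ↔ ∀ c ∈ C, ∑ i, x i * c i ^ q ^ e = 0 := Iff.rfl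

open Matrix in
/-- For even `m` and a self-dual basis `α`, the Gabidulin code `G_{m/2}(α)` is
`e`-Galois self-dual if and only if `e = m / 2`. -/
theorem gab_selfDual_iff
    (q m : ℕ) (hq : IsPrimePow q) (hm : 0 < m) (hmeven : 2 ∣ m)
    (K F : Type) [Field K] [Field F] [Algebra K F] [Fintype K] [Fintype F]
    (hK : Fintype.card K = q) (hF : Fintype.card F = q ^ m)
    (α : Fin m → F) (hα : ∃ b : Module.Basis (Fin m) K F, ⇑b = α)
    (hsd : ∀ i j, Algebra.trace K F (α i * α j) = if i = j then 1 else 0)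
    (e : ℕ) (he : e ≤ m - 1) :
    gab q (m / 2) α = galoisDual q e (gab q (m / 2) α) ↔ e = m / 2 := by
  classical
  obtain ⟨b, hb⟩ := hα
  have hq2 : 2 ≤ q := hq.two_le
  set k := m / 2 with hkdef
  have hm2k : m = 2 * k := (Nat.mul_div_cancel' hmeven).symm
  have hk1 : 1 ≤ k := by omega
  have hkm : k < m := by omega
  have he' : e < m := by omega
  -- characteristic
  obtain ⟨p, r, hpP, hr0, hpr⟩ := hq
  have hp : p.Prime := Nat.prime_iff.mpr hpP
  haveI := ringChar.charP K
  obtain ⟨n, hpK, hcardK⟩ := FiniteField.card K (ringChar K)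
  have hpeq : p = ringChar K := by
    have hd : p ∣ (ringChar K) ^ (n : ℕ) := by
      rw [← hcardK, hK, ← hpr]; exact dvd_pow_self p hr0.ne'
    exact (Nat.prime_dvd_prime_iff_eq hp hpK).mp (hp.dvd_of_dvd_pow hd)
  haveI : CharP K p := hpeq ▸ ringChar.charP K
  haveI : CharP F p := charP_of_injective_algebraMap' K p
  haveI : Fact p.Prime := ⟨hp⟩
  have haddq : ∀ (t : ℕ) (x y : F), (x + y) ^ q ^ t = x ^ q ^ t + y ^ q ^ t := by
    intro t x y
    rw [← hpr, ← pow_mul]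
    exact add_pow_char_pow x y p (r * t)
  -- Frobenius as AlgEquiv
  have hKfix : ∀ a : K, a ^ q = a := fun a => by rw [← hK]; exact FiniteField.pow_card a
  let φhom : F →ₐ[K] F :=
    { toFun := fun x => x ^ q
      map_one' := one_pow q
      map_mul' := fun x y => mul_pow x y q
      map_zero' := zero_pow (by omega)
      map_add' := fun x y => by simpa using haddq 1 x y
      commutes' := fun a => by
        show (algebraMap K F a) ^ q = algebraMap K F a
        rw [← map_pow, hKfix] }
  have φbij : Function.Bijective φhom :=
    Finite.injective_iff_bijective.mp φhom.toRingHom.injective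
  let φ : F ≃ₐ[K] F := AlgEquiv.ofBijective φhom φbij
  have hφ : ∀ (s : ℕ) (x : F), (φ ^ s) x = x ^ q ^ s := by
    intro s
    induction s with
    | zero => intro x; simp
    | succ n ih =>
      intro x
      have h1 : (φ ^ (n + 1)) x = (φ ^ n) (φ x) := by rw [pow_succ]; rfl
      have h2 : φ x = x ^ q := rfl
      rw [h1, h2, ih, ← pow_mul, ← pow_succ']
  -- finite dimensionality
  haveI : FiniteDimensional K F := Module.Finite.of_basis b
  have hfr : Module.finrank K F = m := by
    rw [Module.finrank_eq_card_basis b, Fintype.card_fin]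
  -- injectivity of s ↦ φ ^ s on Fin m
  have hinj : Function.Injective (fun s : Fin m => φ ^ (s : ℕ)) := by
    intro s u hsu
    obtain ⟨g, hg⟩ := IsCyclic.exists_generator (α := Fˣ)
    have hord : orderOf g = q ^ m - 1 := by
      rw [orderOf_eq_card_of_forall_mem_zpowers hg, Nat.card_eq_fintype_card, Fintype.card_units, hF]
    have h1 : (g : F) ^ q ^ (s : ℕ) = (g : F) ^ q ^ (u : ℕ) := by
      have := congrArg (fun σ : F ≃ₐ[K] F => σ (g : F)) hsu
      simpa [hφ] using this
    have h2 : g ^ q ^ (s : ℕ) = g ^ q ^ (u : ℕ) := by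
      ext; simpa [Units.val_pow_eq_pow_val] using h1
    have h3 : q ^ (s : ℕ) ≡ q ^ (u : ℕ) [MOD q ^ m - 1] := by
      rw [← hord]; exact pow_eq_pow_iff_modEq.mp h2
    have hbnd : ∀ t : Fin m, q ^ (t : ℕ) < q ^ m - 1 := by
      intro t
      have h4 : q ^ (t : ℕ) ≤ q ^ (m - 1) := Nat.pow_le_pow_right (by omega) (by omega)
      have h5 : q ^ m = q * q ^ (m - 1) := by
        rw [← pow_succ']
        congr 1
        omega
      have h6 : 2 * q ^ (m - 1) ≤ q * q ^ (m - 1) :=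
        Nat.mul_le_mul_right _ hq2
      have h7 : q ^ 1 ≤ q ^ (m - 1) := Nat.pow_le_pow_right (by omega) (by omega)
      have h8 : q ^ 1 = q := pow_one q
      omega
    exact Fin.ext (Nat.pow_right_injective hq2 (h3.eq_of_lt_of_lt (hbnd s) (hbnd u)))
  have hbij : Function.Bijective (fun s : Fin m => φ ^ (s : ℕ)) := by
    refine (Fintype.bijective_iff_injective_and_card _).mpr ⟨hinj, ?_⟩
    rw [Fintype.card_fin, ← Nat.card_eq_fintype_card, IsGalois.card_aut_eq_finrank, hfr]
  -- trace formula
  have htr : ∀ x : F, ∑ s : Fin m, x ^ q ^ (s : ℕ) = algebraMap K F (Algebra.trace K F x) := by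
    intro x
    rw [trace_eq_sum_automorphisms]
    exact Fintype.sum_bijective _ hbij _ _ (fun s => (hφ s x).symm)
  -- Moore matrix identities
  have hM1 : ∀ i j : Fin m,
      ∑ s : Fin m, α i ^ q ^ (s : ℕ) * α j ^ q ^ (s : ℕ) = if i = j then 1 else 0 := by
    intro i j
    have h1 := htr (α i * α j)
    rw [hsd i j] at h1
    simp_rw [mul_pow] at h1
    rw [h1]
    split_ifs <;> simp
  set M := (Matrix.of fun s i => α i ^ q ^ (s : ℕ) : Matrix (Fin m) (Fin m) F) with hMdef
  have hMtM : Mᵀ * M = 1 := by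
    ext i j
    rw [Matrix.mul_apply, Matrix.one_apply]
    simpa [hMdef] using hM1 i j
  have hMMt : M * Mᵀ = 1 := mul_eq_one_comm.mpr hMtM
  have key : ∀ s u : Fin m,
      ∑ i, α i ^ q ^ (s : ℕ) * α i ^ q ^ (u : ℕ) = if s = u then 1 else 0 := by
    intro s u
    have h := congrFun (congrFun hMMt s) u
    rw [Matrix.mul_apply, Matrix.one_apply] at h
    simpa [hMdef] using h
  -- exponent reduction mod m
  have hqm : ∀ x : F, x ^ q ^ m = x := fun x => by rw [← hF]; exact FiniteField.pow_card x
  have hstep : ∀ (x : F) (t : ℕ), x ^ q ^ (t + m) = x ^ q ^ t := by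
    intro x t; rw [pow_add, pow_mul, hqm]
  have hmodm : ∀ (d : ℕ) (x : F) (t : ℕ), x ^ q ^ (t + m * d) = x ^ q ^ t := by
    intro d
    induction d with
    | zero => simp
    | succ n ih =>
      intro x t
      rw [Nat.mul_succ, ← Nat.add_assoc, hstep, ih]
  have hred : ∀ (x : F) (t : ℕ), x ^ q ^ t = x ^ q ^ (t % m) := by
    intro x t
    conv_lhs => rw [← Nat.mod_add_div t m]
    rw [hmodm]
  have keyN : ∀ s u : ℕ,
      ∑ i, α i ^ q ^ s * α i ^ q ^ u = if s % m = u % m then 1 else 0 := by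
    intro s u
    have hs : s % m < m := Nat.mod_lt _ hm
    have hu : u % m < m := Nat.mod_lt _ hm
    have h := key ⟨s % m, hs⟩ ⟨u % m, hu⟩
    simp only [Fin.mk.injEq] at h
    calc ∑ i, α i ^ q ^ s * α i ^ q ^ u
        = ∑ i, α i ^ q ^ (s % m) * α i ^ q ^ (u % m) :=
          Finset.sum_congr rfl fun i _ => by rw [hred (α i) s, hred (α i) u]
      _ = if s % m = u % m then 1 else 0 := h
  -- pairing
  have hpair : ∀ s u : ℕ,
      ∑ i, α i ^ q ^ s * (α i ^ q ^ u) ^ q ^ e = if s % m = (u + e) % m then 1 else 0 := by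
    intro s u
    have h : ∀ i, (α i ^ q ^ u) ^ q ^ e = α i ^ q ^ (u + e) := fun i => by
      rw [← pow_mul, ← pow_add]
    simp_rw [h]
    exact keyN s (u + e)
  -- generators
  have hgen : ∀ s : ℕ, s < k → (fun j : Fin m => α j ^ q ^ s) ∈ gab q k α := by
    intro s hs
    exact Submodule.subset_span ⟨⟨s, hs⟩, rfl⟩
  have hqe0 : q ^ e ≠ 0 := by positivity
  -- dual membership criterion
  have hmem_dual : ∀ x : Fin m → F,
      x ∈ galoisDual q e (gab q k α) ↔
        ∀ bb : Fin k, ∑ i, x i * (α i ^ q ^ (bb : ℕ)) ^ q ^ e = 0 := by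
    intro x
    rw [mem_galoisDual]
    constructor
    · intro hx bb
      exact hx _ (hgen bb bb.2)
    · intro hx c hc
      induction hc using Submodule.span_induction with
      | mem c hcmem =>
        obtain ⟨bb, rfl⟩ := hcmem
        exact hx bb
      | zero => simp [zero_pow hqe0]
      | add c1 c2 _ _ h1 h2 =>
        simp only [Pi.add_apply]
        calc ∑ i, x i * (c1 i + c2 i) ^ q ^ e
            = ∑ i, (x i * c1 i ^ q ^ e + x i * c2 i ^ q ^ e) :=
              Finset.sum_congr rfl fun i _ => by rw [haddq, mul_add]
          _ = 0 := by rw [Finset.sum_add_distrib, h1, h2, add_zero]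
      | smul t c _ h1 =>
        simp only [Pi.smul_apply, smul_eq_mul]
        calc ∑ i, x i * (t * c i) ^ q ^ e
            = t ^ q ^ e * ∑ i, x i * c i ^ q ^ e := by
              rw [Finset.mul_sum]
              exact Finset.sum_congr rfl fun i _ => by rw [mul_pow]; ring
          _ = 0 := by rw [h1, mul_zero]
  constructor
  · -- self-dual ⟹ e = k
    intro hEq
    by_contra hne
    obtain ⟨bb, t, hbk, htk, hcond⟩ :
        ∃ bb t : ℕ, bb < k ∧ t < k ∧ t % m = (bb + e) % m := by
      rcases lt_or_gt_of_ne hne with h | h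
      · exact ⟨0, e, hk1, h, by rw [zero_add]⟩
      · refine ⟨m - e, 0, by omega, by omega, ?_⟩
        rw [Nat.sub_add_cancel (le_of_lt he'), Nat.zero_mod, Nat.mod_self]
    have hrowt : (fun j : Fin m => α j ^ q ^ t) ∈ gab q k α := hgen t htk
    rw [hEq, hmem_dual] at hrowt
    have h0 := hrowt ⟨bb, hbk⟩
    rw [hpair t bb, if_pos hcond] at h0
    exact one_ne_zero h0
  · -- e = k ⟹ self-dual
    intro hek
    subst hek
    apply le_antisymm
    · -- G ⊆ dual
      refine Submodule.span_le.mpr ?_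
      rintro c ⟨bb, rfl⟩
      rw [SetLike.mem_coe, hmem_dual]
      intro bb'
      rw [hpair (bb : ℕ) (bb' : ℕ), if_neg]
      intro hcontra
      have h1 : (bb : ℕ) % m = (bb : ℕ) := Nat.mod_eq_of_lt (by have := bb.isLt; omega)
      have h2 : ((bb' : ℕ) + k) % m = (bb' : ℕ) + k :=
        Nat.mod_eq_of_lt (by have := bb'.isLt; omega)
      rw [h1, h2] at hcontra
      have := bb.isLt
      omega
    · -- dual ⊆ G
      intro x hx
      rw [hmem_dual] at hx
      set c : Fin m → F := Matrix.vecMul x Mᵀ with hcdef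
      have hcM : Matrix.vecMul c M = x := by
        rw [hcdef, Matrix.vecMul_vecMul, hMtM, Matrix.vecMul_one]
      have hxc : ∀ i, x i = ∑ s : Fin m, c s * α i ^ q ^ (s : ℕ) := by
        intro i
        have h := congrFun hcM i
        rw [← h]
        simp [Matrix.vecMul, dotProduct, hMdef]
      have hczero : ∀ s : Fin m, k ≤ (s : ℕ) → c s = 0 := by
        intro s hs
        have hbs : (s : ℕ) - k < k := by have := s.isLt; omega
        have h0 := hx ⟨(s : ℕ) - k, hbs⟩
        have hpair' : ∀ s' : Fin m,
            ∑ i, α i ^ q ^ (s' : ℕ) * (α i ^ q ^ ((s : ℕ) - k)) ^ q ^ k =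
              if s' = s then 1 else 0 := by
          intro s'
          rw [hpair (s' : ℕ) ((s : ℕ) - k), Nat.sub_add_cancel hs,
            Nat.mod_eq_of_lt s.isLt, Nat.mod_eq_of_lt s'.isLt]
          simp [Fin.ext_iff]
        have h00 : ∑ i, x i * (α i ^ q ^ ((s : ℕ) - k)) ^ q ^ k
            = ∑ s' : Fin m, c s' * (if s' = s then 1 else 0) := by
          calc ∑ i, x i * (α i ^ q ^ ((s : ℕ) - k)) ^ q ^ k
              = ∑ i, ∑ s' : Fin m,
                  c s' * (α i ^ q ^ (s' : ℕ) * (α i ^ q ^ ((s : ℕ) - k)) ^ q ^ k) :=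
                Finset.sum_congr rfl fun i _ => by
                  rw [hxc i, Finset.sum_mul]
                  exact Finset.sum_congr rfl fun s' _ => by rw [mul_assoc]
            _ = ∑ s' : Fin m, ∑ i,
                  c s' * (α i ^ q ^ (s' : ℕ) * (α i ^ q ^ ((s : ℕ) - k)) ^ q ^ k) :=
                Finset.sum_comm
            _ = ∑ s' : Fin m, c s' * (if s' = s then 1 else 0) :=
                Finset.sum_congr rfl fun s' _ => by
                  rw [← Finset.mul_sum, hpair' s']
        rw [h00] at h0
        simpa using h0
      have hxsum : x = ∑ s : Fin m, c s • (fun j : Fin m => α j ^ q ^ (s : ℕ)) := by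
        funext i
        rw [hxc i]
        simp [Finset.sum_apply]
      rw [hxsum]
      apply Submodule.sum_mem
      intro s _
      by_cases hsk : (s : ℕ) < k
      · exact Submodule.smul_mem _ _ (hgen s hsk)
      · rw [hczero s (by omega), zero_smul]
        exact Submodule.zero_mem _
end

section
/- Let α be a basis of F_{q^m} over F_q and let 1 ≤ k ≤ m. Then the Gabidulin code G_k(α) is an MDS code: its minimum Hamming distance equals m − k + 1, i.e., every nonzero codeword of G_k(α) has Hamming weight at least m − k + 1, and some nonzero codeword has Hamming weight exactly m − k + 1. -/
section Aux
variable {K F : Type} [Field K] [Field F] [Algebra K F]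

/-- The `q`-linearized map attached to coefficients `c`. -/
noncomputable def gabMap (q : ℕ) (k : ℕ)
    (hadd : ∀ (n : ℕ) (x y : F), (x + y) ^ q ^ n = x ^ q ^ n + y ^ q ^ n)
    (halg : ∀ (n : ℕ) (a : K), (algebraMap K F a) ^ q ^ n = algebraMap K F a)
    (c : Fin k → F) : F →ₗ[K] F where
  toFun x := ∑ i, c i * x ^ q ^ (i : ℕ)
  map_add' x y := by
    rw [← Finset.sum_add_distrib]
    refine Finset.sum_congr rfl fun i _ => ?_
    rw [hadd, mul_add]
  map_smul' a x := by
    simp only [Algebra.smul_def, RingHom.id_apply, Finset.mul_sum]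
    refine Finset.sum_congr rfl fun i _ => ?_
    rw [mul_pow, halg]
    ring

lemma gab_ker_finrank_le [Fintype K] [Fintype F] (q k : ℕ) (hq2 : 2 ≤ q)
    (hK : Fintype.card K = q)
    (hadd : ∀ (n : ℕ) (x y : F), (x + y) ^ q ^ n = x ^ q ^ n + y ^ q ^ n)
    (halg : ∀ (n : ℕ) (a : K), (algebraMap K F a) ^ q ^ n = algebraMap K F a)
    (c : Fin k → F) (hc : c ≠ 0) :
    Module.finrank K (LinearMap.ker (gabMap q k hadd halg c)) ≤ k - 1 := by
  classical
  set L := gabMap q k hadd halg c with hL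
  set P : Polynomial F := ∑ i : Fin k, Polynomial.C (c i) * Polynomial.X ^ (q ^ (i : ℕ)) with hPdef
  obtain ⟨i0, hi0⟩ := Function.ne_iff.mp hc
  simp only [Pi.zero_apply] at hi0
  have hcoeff : P.coeff (q ^ (i0 : ℕ)) = c i0 := by
    rw [hPdef, Polynomial.finset_sum_coeff]
    rw [Finset.sum_eq_single i0]
    · simp
    · intro j _ hji
      have hne : q ^ (j : ℕ) ≠ q ^ (i0 : ℕ) := fun h =>
        hji (Fin.ext (Nat.pow_right_injective hq2 h))
      simp [Polynomial.coeff_X_pow, hne, Ne.symm hne]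
    · simp
  have hP0 : P ≠ 0 := fun h => hi0 (by simpa [h] using hcoeff.symm)
  have hdeg : P.natDegree ≤ q ^ (k - 1) := by
    apply Polynomial.natDegree_sum_le_of_forall_le
    intro i _
    refine (Polynomial.natDegree_C_mul_le _ _).trans ?_
    rw [Polynomial.natDegree_X_pow]
    exact Nat.pow_le_pow_right (by omega) (by omega)
  have heval : ∀ x : F, P.eval x = L x := by
    intro x
    rw [hPdef]
    simp [Polynomial.eval_finset_sum, gabMap]
    rfl
  have hcard : Fintype.card (LinearMap.ker L) ≤ q ^ (k - 1) := by
    have hinj : Function.Injective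
        (fun x : LinearMap.ker L => (⟨(x : F), by
          rw [Multiset.mem_toFinset, Polynomial.mem_roots hP0]
          exact (heval _).trans x.2⟩ : {y // y ∈ P.roots.toFinset})) := by
      intro a b h
      simp only [Subtype.mk.injEq] at h
      exact Subtype.ext h
    calc Fintype.card (LinearMap.ker L) ≤ Fintype.card {y // y ∈ P.roots.toFinset} :=
          Fintype.card_le_of_injective _ hinj
      _ = P.roots.toFinset.card := Fintype.card_coe _
      _ ≤ Multiset.card P.roots := P.roots.toFinset_card_le
      _ ≤ P.natDegree := P.card_roots'
      _ ≤ q ^ (k - 1) := hdeg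
  have hcard2 : Fintype.card (LinearMap.ker L) = q ^ Module.finrank K (LinearMap.ker L) := by
    rw [← hK]; exact Module.card_eq_pow_finrank
  rw [hcard2] at hcard
  exact (Nat.pow_le_pow_iff_right hq2).mp hcard

end Aux

/-- The Gabidulin code `G_k(α)` is MDS: its minimum Hamming distance is `m - k + 1`. -/
theorem gab_mds
    (q m : ℕ) (hq : IsPrimePow q) (hm : 0 < m)
    (K F : Type) [Field K] [Field F] [Algebra K F] [Fintype K] [Fintype F]
    [DecidableEq F]
    (hK : Fintype.card K = q) (hF : Fintype.card F = q ^ m)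
    (α : Fin m → F) (hα : ∃ b : Module.Basis (Fin m) K F, ⇑b = α)
    (k : ℕ) (hk1 : 1 ≤ k) (hk2 : k ≤ m) :
    (∀ c ∈ gab q k α, c ≠ 0 → m - k + 1 ≤ hammingNorm c) ∧
      (∃ c ∈ gab q k α, c ≠ 0 ∧ hammingNorm c = m - k + 1) := by
  classical
  obtain ⟨b, hb⟩ := hα
  have hq2 : 2 ≤ q := hq.two_le
  -- characteristic facts
  set p := ringChar K with hpdef
  haveI hpK : CharP K p := ringChar.charP K
  obtain ⟨s, hps, hqs⟩ : ∃ s : ℕ, p.Prime ∧ q = p ^ s := by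
    obtain ⟨n, hp', hcard⟩ := FiniteField.card K p
    exact ⟨n, hp', by rw [← hK, hcard]⟩
  haveI hpF : CharP F p := charP_of_injective_algebraMap (algebraMap K F).injective p
  haveI : Fact p.Prime := ⟨hps⟩
  have hadd : ∀ (n : ℕ) (x y : F), (x + y) ^ q ^ n = x ^ q ^ n + y ^ q ^ n := by
    intro n x y
    rw [hqs, ← pow_mul]
    exact add_pow_char_pow x y p _
  have halg : ∀ (n : ℕ) (a : K), (algebraMap K F a) ^ q ^ n = algebraMap K F a := by
    intro n a
    rw [← map_pow, ← hK, FiniteField.pow_card_pow]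
  haveI : FiniteDimensional K F := Module.Basis.finiteDimensional_of_finite b
  -- key counting lemma
  have key : ∀ c : Fin k → F, c ≠ 0 →
      (Finset.univ.filter (fun j : Fin m => ∑ i, c i * α j ^ q ^ (i : ℕ) = 0)).card ≤ k - 1 := by
    intro c hc
    have hfin := gab_ker_finrank_le q k hq2 hK hadd halg c hc
    set L := gabMap q k hadd halg c with hLdef
    set S := Finset.univ.filter (fun j : Fin m => ∑ i, c i * α j ^ q ^ (i : ℕ) = 0) with hS
    have hmem : ∀ j ∈ S, α j ∈ LinearMap.ker L := by
      intro j hj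
      rw [LinearMap.mem_ker]
      exact (Finset.mem_filter.mp hj).2
    have hind : LinearIndependent K
        (fun j : {x // x ∈ S} => (⟨α j, hmem j j.2⟩ : LinearMap.ker L)) := by
      apply LinearIndependent.of_comp (LinearMap.ker L).subtype
      have heq : ((LinearMap.ker L).subtype ∘ fun j : {x // x ∈ S} =>
          (⟨α j, hmem j j.2⟩ : LinearMap.ker L)) = α ∘ (fun j : {x // x ∈ S} => (j : Fin m)) := rfl
      rw [heq, ← hb]
      exact b.linearIndependent.comp _ Subtype.val_injective
    have hcle := hind.fintype_card_le_finrank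
    rw [Fintype.card_coe] at hcle
    exact hcle.trans hfin
  -- lower bound half
  have lower : ∀ c' ∈ gab q k α, c' ≠ 0 → m - k + 1 ≤ hammingNorm c' := by
    intro c' hc' hne
    obtain ⟨c, hcs⟩ := (Submodule.mem_span_range_iff_exists_fun _).mp hc'
    have hc0 : c ≠ 0 := by
      rintro rfl
      simp only [Pi.zero_apply, zero_smul, Finset.sum_const_zero] at hcs
      exact hne hcs.symm
    have hcj : ∀ j, c' j = ∑ i, c i * α j ^ q ^ (i : ℕ) := by
      intro j
      rw [← hcs]
      simp [Finset.sum_apply]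
    have hSkey := key c hc0
    have hfilter :
        (Finset.univ.filter (fun j : Fin m => ∑ i, c i * α j ^ q ^ (i : ℕ) = 0)) =
        (Finset.univ.filter (fun j : Fin m => c' j = 0)) := by
      apply Finset.filter_congr
      intro j _
      rw [hcj j]
    rw [hfilter] at hSkey
    have hnorm : hammingNorm c' = (Finset.univ.filter (fun j : Fin m => c' j ≠ 0)).card := rfl
    have hsplit := Finset.card_filter_add_card_filter_not
      (s := (Finset.univ : Finset (Fin m))) (p := fun j => c' j = 0)
    simp only [Finset.card_univ, Fintype.card_fin] at hsplit
    have : (Finset.univ.filter (fun j : Fin m => ¬ c' j = 0)).card =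
        (Finset.univ.filter (fun j : Fin m => c' j ≠ 0)).card := rfl
    omega
  refine ⟨lower, ?_⟩
  -- existence half
  have hk1m : k - 1 ≤ m := by omega
  set T : (Fin k → F) →ₗ[F] (Fin (k - 1) → F) :=
    { toFun := fun c => fun j => ∑ i, c i * α (Fin.castLE hk1m j) ^ q ^ (i : ℕ),
      map_add' := by
        intro x y
        ext j
        simp [add_mul, Finset.sum_add_distrib]
      map_smul' := by
        intro r x
        ext j
        simp [Finset.mul_sum, mul_assoc] } with hT
  have hker : LinearMap.ker T ≠ ⊥ := by
    intro h
    have hinj : Function.Injective T := LinearMap.ker_eq_bot.mp h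
    have hle := LinearMap.finrank_le_finrank_of_injective hinj
    simp only [Module.finrank_pi, Fintype.card_fin] at hle
    omega
  obtain ⟨c, hcT, hc0⟩ := (Submodule.ne_bot_iff _).mp hker
  set c' : Fin m → F := fun j => ∑ i, c i * α j ^ q ^ (i : ℕ) with hc'def
  have hmem : c' ∈ gab q k α := by
    apply (Submodule.mem_span_range_iff_exists_fun _).mpr
    exact ⟨c, by ext j; simp [hc'def, Finset.sum_apply]⟩
  have hcne : c' ≠ 0 := by
    intro h0
    have hall : ∀ j : Fin m, ∑ i, c i * α j ^ q ^ (i : ℕ) = 0 := fun j => congrFun h0 j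
    have := key c hc0
    have hfull : (Finset.univ.filter (fun j : Fin m => ∑ i, c i * α j ^ q ^ (i : ℕ) = 0)) =
        Finset.univ := by
      apply Finset.filter_true_of_mem
      intro j _
      exact hall j
    rw [hfull, Finset.card_univ, Fintype.card_fin] at this
    omega
  refine ⟨c', hmem, hcne, ?_⟩
  have hlow := lower c' hmem hcne
  -- upper bound: c' vanishes on the first k-1 coordinates
  have hzero : ∀ j : Fin (k - 1), c' (Fin.castLE hk1m j) = 0 := by
    intro j
    have hTc : T c = 0 := LinearMap.mem_ker.mp hcT
    have := congrFun hTc j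
    simpa [T, hc'def] using this
  have himage : (Finset.univ.image (Fin.castLE hk1m)) ⊆
      (Finset.univ.filter (fun j : Fin m => c' j = 0)) := by
    intro j hj
    obtain ⟨i, _, rfl⟩ := Finset.mem_image.mp hj
    exact Finset.mem_filter.mpr ⟨Finset.mem_univ _, hzero i⟩
  have hcardim : (Finset.univ.image (Fin.castLE hk1m)).card = k - 1 := by
    rw [Finset.card_image_of_injective _ (Fin.castLE_injective hk1m),
      Finset.card_univ, Fintype.card_fin]
  have hge : k - 1 ≤ (Finset.univ.filter (fun j : Fin m => c' j = 0)).card := by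
    rw [← hcardim]
    exact Finset.card_le_card himage
  have hsplit := Finset.card_filter_add_card_filter_not
    (s := (Finset.univ : Finset (Fin m))) (p := fun j => c' j = 0)
  simp only [Finset.card_univ, Fintype.card_fin] at hsplit
  have hnorm : hammingNorm c' = (Finset.univ.filter (fun j : Fin m => ¬ c' j = 0)).card := rfl
  omega
end

section
/- Let q be an even prime power and let m be an even positive integer. Then there exists a basis α of F_{q^m} over F_q such that the Gabidulin code G_{m/2}(α) is (m/2)-Galois self-dual, i.e., G_{m/2}(α) = G_{m/2}(α)^{⊥_{m/2}}. -/
open Finset Polynomial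

section Aux

variable {F : Type} [Field F]

/-- A trace-like map: `x ↦ ∑_{i<m} x^{q^i}`. -/
def trq (q m : ℕ) (x : F) : F := ∑ i ∈ Finset.range m, x ^ q ^ i

lemma trq_zero {q : ℕ} (hq2 : 2 ≤ q) (m : ℕ) : trq q m (0 : F) = 0 := by
  unfold trq
  apply Finset.sum_eq_zero
  intro i _
  exact zero_pow (by positivity)

lemma trq_add [CharP F 2] {q : ℕ} {s : ℕ} (hq : q = 2 ^ s) (m : ℕ) (x y : F) :
    trq q m (x + y) = trq q m x + trq q m y := by
  unfold trq
  rw [← Finset.sum_add_distrib]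
  refine Finset.sum_congr rfl fun i _ => ?_
  subst hq
  rw [← pow_mul, add_pow_char_pow]

lemma fixed_pow_pow {q : ℕ} {z : F} (hz : z ^ q = z) (i : ℕ) : z ^ q ^ i = z := by
  induction i with
  | zero => simp
  | succ n ih => rw [pow_succ, pow_mul, ih, hz]

lemma trq_mul_fixed {q : ℕ} {z : F} (hz : z ^ q = z) (m : ℕ) (x : F) :
    trq q m (z * x) = z * trq q m x := by
  unfold trq
  rw [Finset.mul_sum]
  refine Finset.sum_congr rfl fun i _ => ?_
  rw [mul_pow, fixed_pow_pow hz]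

lemma trq_pow_q [CharP F 2] {q : ℕ} {s : ℕ} (hq : q = 2 ^ s) {m : ℕ}
    (hxm : ∀ x : F, x ^ q ^ m = x) (x : F) : (trq q m x) ^ q = trq q m x := by
  unfold trq
  have h1 : (∑ i ∈ Finset.range m, x ^ q ^ i) ^ q = ∑ i ∈ Finset.range m, (x ^ q ^ i) ^ q := by
    subst hq
    rw [← pow_one ((2:ℕ)^s), ← pow_mul]
    simpa using sum_pow_char_pow (p := 2) (n := s * 1) (Finset.range m)
      (fun i => x ^ (2 ^ s) ^ i)
  rw [h1]
  have h2 : ∀ i, (x ^ q ^ i) ^ q = x ^ q ^ (i + 1) := by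
    intro i; rw [← pow_mul, ← pow_succ]
  simp only [h2]
  rcases Nat.eq_zero_or_pos m with hm | hm
  · simp [hm]
  · have := Finset.sum_range_succ' (fun i => x ^ q ^ i) (m - 1)
    have hm1 : m - 1 + 1 = m := Nat.succ_pred_eq_of_pos hm
    rw [hm1] at this
    have h3 := Finset.sum_range_succ (fun i => x ^ q ^ (i + 1)) (m - 1)
    calc ∑ i ∈ Finset.range m, x ^ q ^ (i + 1)
        = ∑ i ∈ Finset.range (m-1), x ^ q ^ (i + 1) + x ^ q ^ (m - 1 + 1) := by
          rw [← h3, hm1]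
      _ = ∑ i ∈ Finset.range (m-1), x ^ q ^ (i + 1) + x ^ q ^ 0 := by rw [hm1, hxm, pow_zero, pow_one]
      _ = ∑ i ∈ Finset.range m, x ^ q ^ i := by rw [this]

end Aux

section Aux2

variable {K F : Type} [Field K] [Field F] [Algebra K F] [Fintype K]

lemma fixed_mem_range (q : ℕ) (hq2 : 2 ≤ q) (hK : Fintype.card K = q)
    {z : F} (hz : z ^ q = z) : ∃ k : K, algebraMap K F k = z := by
  classical
  set P : F[X] := X ^ q - X with hP
  have hPne : P ≠ 0 := by
    intro h
    have h1 : P.coeff q = 1 := by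
      rw [hP]
      rw [Polynomial.coeff_sub, Polynomial.coeff_X_pow]
      simp [Polynomial.coeff_X, (by omega : ¬ q = 1), (by omega : ¬ 1 = q), if_neg]
      intro h; omega
    rw [h] at h1
    simp at h1
  have hdeg : P.natDegree ≤ q := by
    refine le_trans (Polynomial.natDegree_sub_le _ _) ?_
    simp [Polynomial.natDegree_X_pow, Polynomial.natDegree_X]
    omega
  have hroot : ∀ y : F, y ^ q = y → y ∈ P.roots.toFinset := by
    intro y hy
    rw [Multiset.mem_toFinset, Polynomial.mem_roots hPne]
    simp [hP, Polynomial.IsRoot, hy]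
  have hTsub : (Finset.univ.image (algebraMap K F)) ⊆ P.roots.toFinset := by
    intro z hzmem
    rcases Finset.mem_image.mp hzmem with ⟨k, _, rfl⟩
    apply hroot
    rw [← map_pow]
    congr 1
    have := FiniteField.pow_card k
    rwa [hK] at this
  have hcards : P.roots.toFinset.card ≤ (Finset.univ.image (algebraMap K F)).card := by
    have h1 : P.roots.toFinset.card ≤ Multiset.card P.roots := Multiset.toFinset_card_le _
    have h2 : Multiset.card P.roots ≤ P.natDegree := Polynomial.card_roots' P
    have h3 : (Finset.univ.image (algebraMap K F)).card = q := by
      rw [Finset.card_image_of_injective _ (algebraMap K F).injective, Finset.card_univ, hK]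
    omega
  have heq := Finset.eq_of_subset_of_card_le hTsub hcards
  have hzmem : z ∈ P.roots.toFinset := hroot z hz
  rw [← heq] at hzmem
  rcases Finset.mem_image.mp hzmem with ⟨k, _, hk⟩
  exact ⟨k, hk⟩

end Aux2

section Main

variable {K F : Type} [Field K] [Field F] [Algebra K F] [Fintype K] [Fintype F] [CharP F 2]

/-- The "kernel" of `x ↦ trq q m (v * x)`, as a `K`-submodule. -/
def kerBq (q s m : ℕ) (hq : q = 2 ^ s) (hs : 0 < s) (hK : Fintype.card K = q) (v : F) :
    Submodule K F where
  carrier := {x | trq q m (v * x) = 0}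
  zero_mem' := by
    have hq2 : 2 ≤ q := by
      subst hq
      calc 2 = 2 ^ 1 := (pow_one 2).symm
        _ ≤ 2 ^ s := Nat.pow_le_pow_right (by norm_num) hs
    simp [Set.mem_setOf_eq, trq_zero hq2 m]
  add_mem' := by
    intro a b ha hb
    simp only [Set.mem_setOf_eq] at *
    rw [mul_add, trq_add hq, ha, hb, add_zero]
  smul_mem' := by
    intro k x hx
    simp only [Set.mem_setOf_eq] at *
    have hk : (algebraMap K F k) ^ q = algebraMap K F k := by
      rw [← map_pow]
      congr 1
      have := FiniteField.pow_card k
      rwa [hK] at this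
    rw [Algebra.smul_def, show v * ((algebraMap K F k) * x) = (algebraMap K F k) * (v * x) by ring,
      trq_mul_fixed hk, hx, mul_zero]

lemma mem_kerBq {q s m : ℕ} {hq : q = 2 ^ s} {hs : 0 < s} {hK : Fintype.card K = q} {v x : F} :
    x ∈ kerBq (K := K) q s m hq hs hK v ↔ trq q m (v * x) = 0 := Iff.rfl

end Main

section Induction

variable {K F : Type} [Field K] [Field F] [Algebra K F] [Fintype K] [Fintype F] [CharP F 2]

set_option maxHeartbeats 1000000 in
lemma exists_orthonormal (q s m : ℕ) (hq : q = 2 ^ s) (hs : 0 < s)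
    (hK : Fintype.card K = q) (hF : Fintype.card F = q ^ m) :
    ∀ (n : ℕ) (W : Submodule K F), Module.finrank K ↥W = n →
    (∀ x ∈ W, x ≠ 0 → ∃ y ∈ W, trq q m (x * y) ≠ 0) →
    (∃ v ∈ W, trq q m (v * v) ≠ 0) →
    ∃ α : Fin n → F, (∀ i, α i ∈ W) ∧
      (∀ i j, trq q m (α i * α j) = if i = j then (1:F) else 0) := by
  classical
  haveI : FiniteDimensional K F := Module.Finite.of_finite
  have hq2 : 2 ≤ q := by
    subst hq
    calc 2 = 2 ^ 1 := (pow_one 2).symm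
      _ ≤ 2 ^ s := Nat.pow_le_pow_right (by norm_num) hs
  have hxm : ∀ x : F, x ^ q ^ m = x := by
    intro x; have := FiniteField.pow_card x; rwa [hF] at this
  have hfix : ∀ x : F, (trq q m x) ^ q = trq q m x := fun x => trq_pow_q hq hxm x
  have halg : ∀ k : K, (algebraMap K F k) ^ q = algebraMap K F k := by
    intro k; rw [← map_pow]; congr 1
    have := FiniteField.pow_card k; rwa [hK] at this
  have hWmul : ∀ (W : Submodule K F) (z x : F), z ^ q = z → x ∈ W → z * x ∈ W := by
    intro W z x hz hx
    rcases fixed_mem_range q hq2 hK hz with ⟨k, hk⟩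
    rw [← hk, ← Algebra.smul_def]; exact W.smul_mem _ hx
  have bsymm : ∀ x y : F, trq q m (x * y) = trq q m (y * x) := fun x y => by rw [mul_comm]
  have badd : ∀ x y z : F, trq q m (x * (y + z)) = trq q m (x * y) + trq q m (x * z) := by
    intro x y z; rw [mul_add, trq_add hq]
  have badd' : ∀ x y z : F, trq q m ((y + z) * x) = trq q m (y * x) + trq q m (z * x) := by
    intro x y z; rw [add_mul, trq_add hq]
  have bsmul : ∀ (c x y : F), c ^ q = c → trq q m (x * (c * y)) = c * trq q m (x * y) := by
    intro c x y hc; rw [show x * (c * y) = c * (x * y) by ring, trq_mul_fixed hc]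
  have bsmulK : ∀ (k : K) (x y : F),
      trq q m (x * (k • y)) = algebraMap K F k * trq q m (x * y) := by
    intro k x y; rw [Algebra.smul_def]; exact bsmul _ _ _ (halg k)
  have bsmulK' : ∀ (k : K) (x y : F),
      trq q m ((k • y) * x) = algebraMap K F k * trq q m (y * x) := by
    intro k x y; rw [mul_comm, bsmulK, mul_comm y x]
  have hchar2 : ∀ t : F, t + t = 0 := by
    intro t
    have h2 : (2 : F) = 0 := by exact_mod_cast CharP.cast_eq_zero F 2
    calc t + t = 2 * t := by ring
      _ = 0 := by rw [h2, zero_mul]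
  have hsub : ∀ a b : F, a - b = a + b := by
    intro a b; rw [sub_eq_add_neg, CharTwo.neg_eq]
  intro n
  induction n using Nat.strong_induction_on with
  | _ n IH =>
  intro W hrank hND hNA
  rcases Nat.eq_zero_or_pos n with hn0 | hn0
  · subst hn0
    exact ⟨Fin.elim0, fun i => i.elim0, fun i => i.elim0⟩
  obtain ⟨v, hvW, hvv⟩ := hNA
  set c := trq q m (v * v) with hc_def
  have hcq : c ^ q = c := hfix _
  set d := c ^ (q / 2) with hd_def
  have hq_half : q / 2 + q / 2 = q := by
    have h2q : 2 ∣ q := by subst hq; exact dvd_pow_self 2 (by omega)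
    omega
  have hd2 : d * d = c := by rw [hd_def, ← pow_add, hq_half, hcq]
  have hdq : d ^ q = d := by rw [hd_def, ← pow_mul, mul_comm, pow_mul, hcq]
  have hdne : d ≠ 0 := by
    intro h; apply hvv; rw [← hd2, h, mul_zero]
  have hdinvq : (d⁻¹) ^ q = d⁻¹ := by rw [inv_pow, hdq]
  set v₀ := d⁻¹ * v with hv₀_def
  have hv₀W : v₀ ∈ W := hWmul W _ _ hdinvq hvW
  have hv₀v₀ : trq q m (v₀ * v₀) = 1 := by
    rw [show v₀ * v₀ = d⁻¹ * (d⁻¹ * (v * v)) by rw [hv₀_def]; ring,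
      trq_mul_fixed hdinvq, trq_mul_fixed hdinvq, ← hc_def, ← hd2]
    field_simp
  have hv₀ne : v₀ ≠ 0 := by
    intro h
    rw [h, mul_zero, trq_zero hq2] at hv₀v₀
    exact one_ne_zero hv₀v₀.symm
  set W' : Submodule K F := W ⊓ kerBq q s m hq hs hK v₀ with hW'_def
  have hW'sub : ∀ x ∈ W', x ∈ W := fun x hx => hx.1
  have hW'ker : ∀ x ∈ W', trq q m (v₀ * x) = 0 := fun x hx => hx.2
  have hproj : ∀ x ∈ W, ∃ k : K,
      algebraMap K F k = trq q m (v₀ * x) ∧ x - k • v₀ ∈ W' := by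
    intro x hx
    rcases fixed_mem_range q hq2 hK (hfix (v₀ * x)) with ⟨k, hk⟩
    refine ⟨k, hk, Submodule.mem_inf.mpr ⟨?_, ?_⟩⟩
    · exact W.sub_mem hx (W.smul_mem k hv₀W)
    · show trq q m (v₀ * (x - k • v₀)) = 0
      rw [hsub, badd, bsmulK, hv₀v₀, mul_one, hk]
      exact hchar2 _
  have hsup : (Submodule.span K {v₀}) ⊔ W' = W := by
    apply le_antisymm
    · refine sup_le ?_ inf_le_left
      rw [Submodule.span_le, Set.singleton_subset_iff]; exact hv₀W
    · intro x hx
      rcases hproj x hx with ⟨k, hk, hmem⟩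
      have hxe : x = k • v₀ + (x - k • v₀) := by abel
      rw [hxe]
      exact Submodule.add_mem _
        (Submodule.mem_sup_left (Submodule.smul_mem _ k (Submodule.mem_span_singleton_self v₀)))
        (Submodule.mem_sup_right hmem)
  have hinf : (Submodule.span K {v₀}) ⊓ W' = ⊥ := by
    rw [eq_bot_iff]
    rintro x ⟨hx1, hx2⟩
    rcases Submodule.mem_span_singleton.mp hx1 with ⟨k, rfl⟩
    have h0 : trq q m (v₀ * (k • v₀)) = 0 := hW'ker _ hx2
    rw [bsmulK, hv₀v₀, mul_one] at h0
    have hk0 : k = 0 := by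
      have := (_root_.map_eq_zero (algebraMap K F)).mp h0
      exact this
    simp [hk0]
  have hrank' : Module.finrank K ↥W' = n - 1 := by
    have h := Submodule.finrank_sup_add_finrank_inf_eq (Submodule.span K {v₀}) W'
    rw [hsup, hinf, finrank_bot, finrank_span_singleton hv₀ne, hrank] at h
    omega
  have hND' : ∀ x ∈ W', x ≠ 0 → ∃ y ∈ W', trq q m (x * y) ≠ 0 := by
    intro x hxW' hxne
    rcases hND x (hW'sub x hxW') hxne with ⟨y, hyW, hxy⟩
    rcases hproj y hyW with ⟨k, hk, hmem⟩
    refine ⟨y - k • v₀, hmem, ?_⟩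
    rw [hsub, badd, bsmulK]
    have h1 : trq q m (x * v₀) = 0 := by rw [bsymm]; exact hW'ker x hxW'
    rw [h1, mul_zero, add_zero]
    exact hxy
  by_cases hNA' : ∃ u ∈ W', trq q m (u * u) ≠ 0
  · -- Case A : restriction still non-alternating
    obtain ⟨β, hβW, hβgram⟩ := IH (n - 1) (by omega) W' hrank' hND' hNA'
    refine ⟨fun i => if h : (i : ℕ) = 0 then v₀
      else β ⟨(i : ℕ) - 1, by have := i.isLt; omega⟩, ?_, ?_⟩
    · intro i
      beta_reduce
      by_cases h : (i : ℕ) = 0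
      · simpa [dif_pos h] using hv₀W
      · simp only [dif_neg h]; exact hW'sub _ (hβW _)
    · intro i j
      beta_reduce
      by_cases hi : (i : ℕ) = 0 <;> by_cases hj : (j : ℕ) = 0
      · have hij : i = j := Fin.ext (by omega)
        simp [dif_pos hi, dif_pos hj, ← hij, hv₀v₀]
      · have hij : i ≠ j := by intro h; rw [h] at hi; exact hj hi
        rw [dif_pos hi, dif_neg hj, if_neg hij]
        exact hW'ker _ (hβW _)
      · have hij : i ≠ j := fun h => hi (h ▸ hj)
        rw [dif_neg hi, dif_pos hj, if_neg hij, bsymm]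
        exact hW'ker _ (hβW _)
      · rw [dif_neg hi, dif_neg hj, hβgram]
        have hiff : ((⟨(i : ℕ) - 1, by have := i.isLt; omega⟩ : Fin (n - 1)) =
            ⟨(j : ℕ) - 1, by have := j.isLt; omega⟩) ↔ (i = j) := by
          rw [Fin.ext_iff, Fin.ext_iff]
          simp only [Fin.val_mk]
          omega
        rw [if_congr hiff rfl rfl]
  · -- Case B : restriction alternating
    push_neg at hNA'
    rcases Nat.lt_or_ge n 2 with hn1 | hn2
    · have hn : n = 1 := by omega
      subst hn
      refine ⟨fun _ => v₀, fun _ => hv₀W, ?_⟩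
      intro i j
      have hij : i = j := Subsingleton.elim i j
      simp [hij, hv₀v₀]
    have hW'ne : W' ≠ ⊥ := by
      intro h
      rw [h, finrank_bot] at hrank'
      omega
    obtain ⟨w, hwW', hwne⟩ := (Submodule.ne_bot_iff _).mp hW'ne
    obtain ⟨u₁, hu₁W', hwu₁⟩ := hND' w hwW' hwne
    set c₂ := trq q m (w * u₁) with hc₂_def
    have hc₂q : c₂ ^ q = c₂ := hfix _
    have hc₂inv : (c₂⁻¹) ^ q = c₂⁻¹ := by rw [inv_pow, hc₂q]
    set u := c₂⁻¹ * u₁ with hu_def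
    have huW' : u ∈ W' := hWmul W' _ _ hc₂inv hu₁W'
    have hwu : trq q m (w * u) = 1 := by
      rw [hu_def, bsmul _ _ _ hc₂inv, ← hc₂_def, inv_mul_cancel₀ hwu₁]
    have huw : trq q m (u * w) = 1 := by rw [bsymm]; exact hwu
    have hww : trq q m (w * w) = 0 := hNA' w hwW'
    have huu : trq q m (u * u) = 0 := hNA' u huW'
    have hv₀w : trq q m (v₀ * w) = 0 := hW'ker w hwW'
    have hv₀u : trq q m (v₀ * u) = 0 := hW'ker u huW'
    have hwv₀ : trq q m (w * v₀) = 0 := by rw [bsymm]; exact hv₀w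
    have huv₀ : trq q m (u * v₀) = 0 := by rw [bsymm]; exact hv₀u
    set W'' : Submodule K F :=
      (W' ⊓ kerBq q s m hq hs hK w) ⊓ kerBq q s m hq hs hK u with hW''_def
    have hW''subW' : ∀ x ∈ W'', x ∈ W' := fun x hx => hx.1.1
    have hW''kw : ∀ x ∈ W'', trq q m (w * x) = 0 := fun x hx => hx.1.2
    have hW''ku : ∀ x ∈ W'', trq q m (u * x) = 0 := fun x hx => hx.2
    have hproj2 : ∀ x ∈ W', ∃ a b : K,
        algebraMap K F a = trq q m (u * x) ∧ algebraMap K F b = trq q m (w * x) ∧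
          x - a • w - b • u ∈ W'' := by
      intro x hx
      rcases fixed_mem_range q hq2 hK (hfix (u * x)) with ⟨a, ha⟩
      rcases fixed_mem_range q hq2 hK (hfix (w * x)) with ⟨b, hb⟩
      refine ⟨a, b, ha, hb, Submodule.mem_inf.mpr ⟨Submodule.mem_inf.mpr ⟨?_, ?_⟩, ?_⟩⟩
      · exact W'.sub_mem (W'.sub_mem hx (W'.smul_mem a hwW')) (W'.smul_mem b huW')
      · show trq q m (w * (x - a • w - b • u)) = 0
        rw [hsub, hsub, badd, badd, bsmulK, bsmulK, hww, hwu, mul_zero, mul_one,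
          add_zero, hb]
        exact hchar2 _
      · show trq q m (u * (x - a • w - b • u)) = 0
        rw [hsub, hsub, badd, badd, bsmulK, bsmulK, huw, huu, mul_zero, mul_one,
          add_zero, ha]
        exact hchar2 _
    -- dimension bookkeeping : finrank W' = 2 + finrank W''
    set Y : Submodule K F := Submodule.span K {u} ⊔ W'' with hY_def
    have hYinf : Submodule.span K {u} ⊓ W'' = ⊥ := by
      rw [eq_bot_iff]
      rintro x ⟨hx1, hx2⟩
      rcases Submodule.mem_span_singleton.mp hx1 with ⟨k, rfl⟩
      have h0 : trq q m (w * (k • u)) = 0 := hW''kw _ hx2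
      rw [bsmulK, hwu, mul_one] at h0
      have hk0 : k = 0 := (_root_.map_eq_zero (algebraMap K F)).mp h0
      simp [hk0]
    have hune : u ≠ 0 := by
      intro h; rw [h, mul_zero, trq_zero hq2] at hwu; exact one_ne_zero hwu.symm
    have hYrank : Module.finrank K ↥Y = 1 + Module.finrank K ↥W'' := by
      have h := Submodule.finrank_sup_add_finrank_inf_eq (Submodule.span K {u}) W''
      rw [hYinf, finrank_bot, finrank_span_singleton hune, ← hY_def] at h
      omega
    have hsup2 : (Submodule.span K {w}) ⊔ Y = W' := by
      apply le_antisymm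
      · refine sup_le ?_ (sup_le ?_ ?_)
        · rw [Submodule.span_le, Set.singleton_subset_iff]; exact hwW'
        · rw [Submodule.span_le, Set.singleton_subset_iff]; exact huW'
        · intro x hx; exact hW''subW' x hx
      · intro x hx
        rcases hproj2 x hx with ⟨a, b, ha, hb, hmem⟩
        have hxe : x = a • w + (b • u + (x - a • w - b • u)) := by abel
        rw [hxe]
        refine Submodule.add_mem _
          (Submodule.mem_sup_left (Submodule.smul_mem _ a (Submodule.mem_span_singleton_self w)))
          (Submodule.mem_sup_right (Submodule.add_mem _
            (Submodule.mem_sup_left (Submodule.smul_mem _ b (Submodule.mem_span_singleton_self u)))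
            (Submodule.mem_sup_right hmem)))
    have hinf2 : (Submodule.span K {w}) ⊓ Y = ⊥ := by
      rw [eq_bot_iff]
      rintro x ⟨hx1, hx2⟩
      rcases Submodule.mem_span_singleton.mp hx1 with ⟨k, rfl⟩
      rcases Submodule.mem_sup.mp hx2 with ⟨y₁, hy₁, y₂, hy₂, hyeq⟩
      rcases Submodule.mem_span_singleton.mp hy₁ with ⟨l, rfl⟩
      have h0 : trq q m (u * (k • w)) = trq q m (u * (l • u + y₂)) := by rw [hyeq]
      rw [bsmulK, huw, mul_one, badd, bsmulK, huu, mul_zero,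
        hW''ku y₂ hy₂, add_zero] at h0
      have hk0 : k = 0 := (_root_.map_eq_zero (algebraMap K F)).mp h0
      simp [hk0]
    have hwne0 := hwne
    have hrank2 : Module.finrank K ↥W'' = n - 3 ∧ 3 ≤ n := by
      have h := Submodule.finrank_sup_add_finrank_inf_eq (Submodule.span K {w}) Y
      rw [hsup2, hinf2, finrank_bot, finrank_span_singleton hwne0, hrank', hYrank] at h
      omega
    -- the three new orthonormal vectors
    set v₁ := v₀ + w with hv₁_def
    set v₂ := v₀ + u with hv₂_def
    set v₃ := v₀ + w + u with hv₃_def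
    have hv₁v₁ : trq q m (v₁ * v₁) = 1 := by
      rw [hv₁_def]
      simp only [badd, badd']
      rw [hv₀v₀, hv₀w, hwv₀, hww]
      norm_num
    have hv₂v₂ : trq q m (v₂ * v₂) = 1 := by
      rw [hv₂_def]
      simp only [badd, badd']
      rw [hv₀v₀, hv₀u, huv₀, huu]
      norm_num
    have hv₁v₂ : trq q m (v₁ * v₂) = 0 := by
      rw [hv₁_def, hv₂_def]
      simp only [badd, badd']
      rw [hv₀v₀, hv₀u, hwv₀, hwu]
      linear_combination hchar2 (1:F)
    have hv₂v₁ : trq q m (v₂ * v₁) = 0 := by rw [bsymm]; exact hv₁v₂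
    have hv₃v₃ : trq q m (v₃ * v₃) = 1 := by
      rw [hv₃_def]
      simp only [badd, badd']
      rw [hv₀v₀, hv₀w, hv₀u, hwv₀, hww, hwu, huv₀, huw, huu]
      linear_combination hchar2 (1:F)
    have hv₁v₃ : trq q m (v₁ * v₃) = 0 := by
      rw [hv₁_def, hv₃_def]
      simp only [badd, badd']
      rw [hv₀v₀, hv₀w, hv₀u, hwv₀, hww, hwu]
      linear_combination hchar2 (1:F)
    have hv₂v₃ : trq q m (v₂ * v₃) = 0 := by
      rw [hv₂_def, hv₃_def]
      simp only [badd, badd']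
      rw [hv₀v₀, hv₀w, hv₀u, huv₀, huw, huu]
      linear_combination hchar2 (1:F)
    have hwv₃ : trq q m (w * v₃) = 1 := by
      rw [hv₃_def]
      simp only [badd, badd']
      rw [hwv₀, hww, hwu]
      norm_num
    have hv₃ne : v₃ ≠ 0 := by
      intro h; rw [h, mul_zero, trq_zero hq2] at hv₃v₃; exact one_ne_zero hv₃v₃.symm
    have hv₁W : v₁ ∈ W := W.add_mem hv₀W (hW'sub w hwW')
    have hv₂W : v₂ ∈ W := W.add_mem hv₀W (hW'sub u huW')
    have hv₃W : v₃ ∈ W := W.add_mem (W.add_mem hv₀W (hW'sub w hwW')) (hW'sub u huW')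
    set X : Submodule K F := Submodule.span K {v₃} ⊔ W'' with hX_def
    have hXinf : Submodule.span K {v₃} ⊓ W'' = ⊥ := by
      rw [eq_bot_iff]
      rintro x ⟨hx1, hx2⟩
      rcases Submodule.mem_span_singleton.mp hx1 with ⟨k, rfl⟩
      have h0 : trq q m (w * (k • v₃)) = 0 := hW''kw _ hx2
      rw [bsmulK, hwv₃, mul_one] at h0
      have hk0 : k = 0 := (_root_.map_eq_zero (algebraMap K F)).mp h0
      simp [hk0]
    have hXrank : Module.finrank K ↥X = n - 2 := by
      have h := Submodule.finrank_sup_add_finrank_inf_eq (Submodule.span K {v₃}) W''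
      rw [hXinf, finrank_bot, finrank_span_singleton hv₃ne, ← hX_def] at h
      omega
    -- orthogonality facts for members of W''
    have hbW''v₀ : ∀ y ∈ W'', trq q m (y * v₀) = 0 := by
      intro y hy; rw [bsymm]; exact hW'ker y (hW''subW' y hy)
    have hbW''w : ∀ y ∈ W'', trq q m (y * w) = 0 := by
      intro y hy; rw [bsymm]; exact hW''kw y hy
    have hbW''u : ∀ y ∈ W'', trq q m (y * u) = 0 := by
      intro y hy; rw [bsymm]; exact hW''ku y hy
    have hbW''v₃ : ∀ y ∈ W'', trq q m (y * v₃) = 0 := by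
      intro y hy
      rw [hv₃_def]
      simp only [badd, badd']
      rw [hbW''v₀ y hy, hbW''w y hy, hbW''u y hy]
      norm_num
    have hNDX : ∀ x ∈ X, x ≠ 0 → ∃ y ∈ X, trq q m (x * y) ≠ 0 := by
      intro x hxX hxne
      rcases Submodule.mem_sup.mp hxX with ⟨x₁, hx₁, y, hy, rfl⟩
      rcases Submodule.mem_span_singleton.mp hx₁ with ⟨k, rfl⟩
      by_cases hk : k = 0
      · subst hk
        rw [zero_smul, zero_add] at hxne ⊢
        rcases hND' y (hW''subW' y hy) hxne with ⟨z, hzW', hyz⟩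
        rcases hproj2 z hzW' with ⟨a, b, ha, hb, hmem⟩
        refine ⟨z - a • w - b • u, Submodule.mem_sup_right hmem, ?_⟩
        rw [hsub, hsub, badd, badd, bsmulK, bsmulK, hbW''w y hy, hbW''u y hy,
          mul_zero, mul_zero, add_zero, add_zero]
        exact hyz
      · refine ⟨v₃, Submodule.mem_sup_left (Submodule.mem_span_singleton_self _), ?_⟩
        rw [badd', bsmulK', hv₃v₃, mul_one, hbW''v₃ y hy, add_zero]
        intro h
        exact hk ((_root_.map_eq_zero (algebraMap K F)).mp h)
    have hNAX : ∃ z ∈ X, trq q m (z * z) ≠ 0 :=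
      ⟨v₃, Submodule.mem_sup_left (Submodule.mem_span_singleton_self _),
        by rw [hv₃v₃]; exact one_ne_zero⟩
    obtain ⟨γ, hγX, hγgram⟩ := IH (n - 2) (by omega) X hXrank hNDX hNAX
    have hXW : X ≤ W := by
      refine sup_le ?_ ?_
      · rw [Submodule.span_le, Set.singleton_subset_iff]; exact hv₃W
      · intro x hx; exact hW'sub x (hW''subW' x hx)
    have hv₁X : ∀ x ∈ X, trq q m (v₁ * x) = 0 := by
      intro x hx
      rcases Submodule.mem_sup.mp hx with ⟨x₁, hx₁, y, hy, rfl⟩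
      rcases Submodule.mem_span_singleton.mp hx₁ with ⟨k, rfl⟩
      rw [badd, bsmulK, hv₁v₃, mul_zero, zero_add, hv₁_def, badd',
        hW'ker y (hW''subW' y hy), hW''kw y hy, add_zero]
      
    have hv₂X : ∀ x ∈ X, trq q m (v₂ * x) = 0 := by
      intro x hx
      rcases Submodule.mem_sup.mp hx with ⟨x₁, hx₁, y, hy, rfl⟩
      rcases Submodule.mem_span_singleton.mp hx₁ with ⟨k, rfl⟩
      rw [badd, bsmulK, hv₂v₃, mul_zero, zero_add, hv₂_def, badd',
        hW'ker y (hW''subW' y hy), hW''ku y hy, add_zero]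
    have hn3 : 3 ≤ n := hrank2.2
    refine ⟨fun i => if (i : ℕ) = 0 then v₁ else if (i : ℕ) = 1 then v₂
      else γ ⟨(i : ℕ) - 2, by have := i.isLt; omega⟩, ?_, ?_⟩
    · intro i
      beta_reduce
      by_cases h0 : (i : ℕ) = 0
      · simpa [h0] using hv₁W
      by_cases h1 : (i : ℕ) = 1
      · simp only [if_neg h0, if_pos h1]; exact hv₂W
      · simp only [if_neg h0, if_neg h1]; exact hXW (hγX _)
    · intro i j
      beta_reduce
      have gram12 : ∀ x ∈ X, trq q m (x * v₁) = 0 := fun x hx => by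
        rw [bsymm]; exact hv₁X x hx
      have gram22 : ∀ x ∈ X, trq q m (x * v₂) = 0 := fun x hx => by
        rw [bsymm]; exact hv₂X x hx
      by_cases hi0 : (i : ℕ) = 0 <;> by_cases hj0 : (j : ℕ) = 0
      · have hij : i = j := Fin.ext (by omega)
        simp [hi0, hj0, ← hij, hv₁v₁]
      · have hij : i ≠ j := by intro h; rw [h] at hi0; exact hj0 hi0
        rw [if_pos hi0, if_neg hj0, if_neg hij]
        by_cases hj1 : (j : ℕ) = 1
        · rw [if_pos hj1]; exact hv₁v₂
        · rw [if_neg hj1]; exact hv₁X _ (hγX _)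
      · have hij : i ≠ j := fun h => hi0 (h ▸ hj0)
        rw [if_neg hi0, if_pos hj0, if_neg hij]
        by_cases hi1 : (i : ℕ) = 1
        · rw [if_pos hi1]; exact hv₂v₁
        · rw [if_neg hi1]; exact gram12 _ (hγX _)
      · rw [if_neg hi0, if_neg hj0]
        by_cases hi1 : (i : ℕ) = 1 <;> by_cases hj1 : (j : ℕ) = 1
        · have hij : i = j := Fin.ext (by omega)
          rw [if_pos hi1, if_pos hj1, if_pos hij]
          exact hv₂v₂
        · have hij : i ≠ j := by intro h; rw [h] at hi1; exact hj1 hi1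
          rw [if_pos hi1, if_neg hj1, if_neg hij]
          exact hv₂X _ (hγX _)
        · have hij : i ≠ j := fun h => hi1 (h ▸ hj1)
          rw [if_neg hi1, if_pos hj1, if_neg hij]
          exact gram22 _ (hγX _)
        · rw [if_neg hi1, if_neg hj1, hγgram]
          have hiff : ((⟨(i : ℕ) - 2, by have := i.isLt; omega⟩ : Fin (n - 2)) =
              ⟨(j : ℕ) - 2, by have := j.isLt; omega⟩) ↔ (i = j) := by
            rw [Fin.ext_iff, Fin.ext_iff]
            simp only [Fin.val_mk]
            omega
          rw [if_congr hiff rfl rfl]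

end Induction

section Glue

lemma trq_exists_ne_zero {F : Type} [Field F] [Fintype F] (q m : ℕ) (hq2 : 2 ≤ q)
    (hm : 0 < m) (hF : Fintype.card F = q ^ m) : ∃ z : F, trq q m z ≠ 0 := by
  classical
  by_contra h
  push_neg at h
  set P : F[X] := ∑ i ∈ Finset.range m, X ^ q ^ i with hP
  have hcoeff : P.coeff (q ^ (m - 1)) = 1 := by
    rw [hP, Polynomial.finset_sum_coeff]
    have : ∀ i ∈ Finset.range m,
        (X ^ q ^ i : F[X]).coeff (q ^ (m - 1)) = if i = m - 1 then 1 else 0 := by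
      intro i _
      rw [Polynomial.coeff_X_pow]
      congr 1
      simp only [eq_iff_iff]
      constructor
      · intro hqe; exact (Nat.pow_right_injective hq2 hqe).symm
      · intro hie; rw [hie]
    rw [Finset.sum_congr rfl this, Finset.sum_ite_eq' (Finset.range m)]
    simp [Finset.mem_range]
    omega
  have hPne : P ≠ 0 := by
    intro h0
    rw [h0] at hcoeff
    simp at hcoeff
  have hdeg : P.natDegree ≤ q ^ (m - 1) := by
    rw [hP]
    apply Polynomial.natDegree_sum_le_of_forall_le
    intro i hi
    rw [Polynomial.natDegree_X_pow]
    exact Nat.pow_le_pow_right (by omega) (by simp [Finset.mem_range] at hi; omega)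
  have hroots : (Finset.univ : Finset F) ⊆ P.roots.toFinset := by
    intro z _
    rw [Multiset.mem_toFinset, Polynomial.mem_roots hPne]
    have : P.eval z = trq q m z := by
      rw [hP, Polynomial.eval_finset_sum]
      simp [trq]
    simp [Polynomial.IsRoot, this, h z]
  have hc1 : Fintype.card F ≤ P.roots.toFinset.card := by
    calc Fintype.card F = (Finset.univ : Finset F).card := (Finset.card_univ).symm
      _ ≤ P.roots.toFinset.card := Finset.card_le_card hroots
  have hc2 : P.roots.toFinset.card ≤ q ^ (m - 1) := by
    calc P.roots.toFinset.card ≤ Multiset.card P.roots := Multiset.toFinset_card_le _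
      _ ≤ P.natDegree := Polynomial.card_roots' P
      _ ≤ q ^ (m - 1) := hdeg
  have : q ^ m ≤ q ^ (m - 1) := by omega
  have hlt : q ^ (m - 1) < q ^ m := Nat.pow_lt_pow_right (by omega) (by omega)
  omega

/-- for a fixed `x`, the set of `c` with `∑ l, x l * (c l)^(q^e) = 0` is an `F`-submodule. -/
def semiKer {F : Type} [Field F] [CharP F 2] (q s e n : ℕ) (hq : q = 2 ^ s)
    (x : Fin n → F) : Submodule F (Fin n → F) where
  carrier := {c | ∑ l, x l * c l ^ q ^ e = 0}
  zero_mem' := by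
    have hqpos : 0 < q ^ e := by subst hq; positivity
    simp [Set.mem_setOf_eq, zero_pow (by omega : q ^ e ≠ 0)]
  add_mem' := by
    intro a b ha hb
    simp only [Set.mem_setOf_eq, Pi.add_apply] at *
    have hpow : ∀ y z : F, (y + z) ^ q ^ e = y ^ q ^ e + z ^ q ^ e := by
      intro y z
      subst hq
      rw [← pow_mul, add_pow_char_pow]
    simp only [hpow, mul_add]
    rw [Finset.sum_add_distrib, ha, hb, add_zero]
  smul_mem' := by
    intro r a ha
    simp only [Set.mem_setOf_eq, Pi.smul_apply, smul_eq_mul] at *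
    have : ∀ l : Fin n, x l * (r * a l) ^ q ^ e = r ^ q ^ e * (x l * a l ^ q ^ e) := by
      intro l; rw [mul_pow]; ring
    simp only [this]
    rw [← Finset.mul_sum, ha, mul_zero]

end Glue


set_option maxHeartbeats 4000000 in
/-- For even `q` and even `m`, there exists a basis `α` of `F_{q^m}` over `F_q` such that
the Gabidulin code `G_{m/2}(α)` is `(m/2)`-Galois self-dual. -/
theorem exists_galois_selfDual_gab
    (q m : ℕ) (hq : IsPrimePow q) (hqeven : Even q) (hm : 0 < m) (hmeven : 2 ∣ m)
    (K F : Type) [Field K] [Field F] [Algebra K F] [Fintype K] [Fintype F]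
    (hK : Fintype.card K = q) (hF : Fintype.card F = q ^ m) :
    ∃ α : Fin m → F, (∃ b : Module.Basis (Fin m) K F, ⇑b = α) ∧
      gab q (m / 2) α = galoisDual q (m / 2) (gab q (m / 2) α) := by
  classical
  -- q = 2 ^ s
  obtain ⟨p, s, hpp, hs, hpk⟩ := hq
  have hpP : p.Prime := Nat.prime_iff.mpr hpp
  have hp2 : p = 2 := by
    have h2q : (2 : ℕ) ∣ p ^ s := by rw [hpk]; exact hqeven.two_dvd
    have h2p : (2 : ℕ) ∣ p := Nat.Prime.dvd_of_dvd_pow Nat.prime_two h2q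
    exact ((Nat.prime_dvd_prime_iff_eq Nat.prime_two hpP).mp h2p).symm
  have hq2s : q = 2 ^ s := by rw [← hpk, hp2]
  have hq2 : 2 ≤ q := by
    rw [hq2s]
    calc 2 = 2 ^ 1 := (pow_one 2).symm
      _ ≤ 2 ^ s := Nat.pow_le_pow_right (by norm_num) hs
  -- char F = 2
  haveI hchar : CharP F 2 := by
    have hcp : CharP F (ringChar F) := ringChar.charP F
    have hrp : (ringChar F).Prime := CharP.char_is_prime F (ringChar F)
    obtain ⟨n, hnp, hcard⟩ := FiniteField.card F (ringChar F)
    have hdvd : ringChar F ∣ 2 ^ (s * m) := by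
      have h1 : ringChar F ∣ Fintype.card F := by
        rw [hcard]; exact dvd_pow_self _ (by exact_mod_cast n.pos.ne')
      rwa [hF, hq2s, ← pow_mul] at h1
    have h2 : ringChar F ∣ 2 := hrp.dvd_of_dvd_pow hdvd
    have : ringChar F = 2 := (Nat.prime_dvd_prime_iff_eq hrp Nat.prime_two).mp h2
    rwa [this] at hcp
  -- finrank K F = m
  haveI : FiniteDimensional K F := Module.Finite.of_finite
  haveI : Nonempty (Fin m) := ⟨⟨0, hm⟩⟩
  have hfr : Module.finrank K F = m := by
    have hcard := Module.card_eq_pow_finrank (K := K) (V := F)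
    rw [hK, hF] at hcard
    exact (Nat.pow_right_injective hq2 hcard).symm
  have hxm : ∀ x : F, x ^ q ^ m = x := by
    intro x; have := FiniteField.pow_card x; rwa [hF] at this
  -- a self-dual basis α exists
  obtain ⟨z, hz⟩ := trq_exists_ne_zero q m hq2 hm hF
  have hND : ∀ x ∈ (⊤ : Submodule K F), x ≠ 0 → ∃ y ∈ (⊤ : Submodule K F),
      trq q m (x * y) ≠ 0 := by
    intro x _ hxne
    refine ⟨x⁻¹ * z, Submodule.mem_top, ?_⟩
    rw [← mul_assoc, mul_inv_cancel₀ hxne, one_mul]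
    exact hz
  have hNA : ∃ v ∈ (⊤ : Submodule K F), trq q m (v * v) ≠ 0 := by
    have h2qm : 2 ∣ q ^ m := dvd_pow (hq2s ▸ dvd_pow_self 2 (by omega)) (by omega)
    refine ⟨z ^ (q ^ m / 2), Submodule.mem_top, ?_⟩
    have : z ^ (q ^ m / 2) * z ^ (q ^ m / 2) = z := by
      rw [← pow_add, (by omega : q ^ m / 2 + q ^ m / 2 = q ^ m), hxm]
    rw [this]
    exact hz
  obtain ⟨α, hαmem, hGram⟩ := exists_orthonormal (K := K) (F := F) q s m hq2s hs hK hF m ⊤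
    (by rw [finrank_top]; exact hfr) hND hNA
  have hGramSum : ∀ l k2 : Fin m,
      ∑ i ∈ Finset.range m, α l ^ q ^ i * α k2 ^ q ^ i = if l = k2 then 1 else 0 := by
    intro l k2
    have := hGram l k2
    simp only [trq, mul_pow] at this
    exact this
  -- the Moore matrix is orthogonal
  have hOrtho : ∀ i j : Fin m,
      ∑ l : Fin m, α l ^ q ^ (i : ℕ) * α l ^ q ^ (j : ℕ) = if i = j then 1 else 0 := by
    set M := (Matrix.of (fun i l => α l ^ q ^ (i : ℕ)) : Matrix (Fin m) (Fin m) F) with hM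
    have hMTM : M.transpose * M = 1 := by
      ext l k2
      rw [Matrix.mul_apply, Matrix.one_apply]
      simp only [hM, Matrix.transpose_apply, Matrix.of_apply]
      rw [Fin.sum_univ_eq_sum_range (fun i => α l ^ q ^ i * α k2 ^ q ^ i) m]
      exact hGramSum l k2
    have hMMT : M * M.transpose = 1 := mul_eq_one_comm.mp hMTM
    intro i j
    have h := congrFun (congrFun hMMT i) j
    rw [Matrix.mul_apply, Matrix.one_apply] at h
    simpa only [hM, Matrix.transpose_apply, Matrix.of_apply] using h
  -- α is a K-basis
  have halg : ∀ kk : K, (algebraMap K F kk) ^ q = algebraMap K F kk := by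
    intro kk; rw [← map_pow]; congr 1
    have := FiniteField.pow_card kk; rwa [hK] at this
  have hsmulpow : ∀ (kk : K) (x : F) (i : ℕ), (kk • x) ^ q ^ i = kk • (x ^ q ^ i) := by
    intro kk x i
    rw [Algebra.smul_def, mul_pow, fixed_pow_pow (halg kk), ← Algebra.smul_def]
  have hsumpow : ∀ (f : Fin m → F) (i : ℕ), (∑ l, f l) ^ q ^ i = ∑ l, f l ^ q ^ i := by
    intro f i
    rw [hq2s, ← pow_mul]
    exact sum_pow_char_pow (p := 2) (n := s * i) Finset.univ f
  have hqine : ∀ i : ℕ, q ^ i ≠ 0 := by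
    intro i
    have : 0 < q ^ i := pow_pos (by omega) i
    omega
  have hli : LinearIndependent K α := by
    refine Fintype.linearIndependent_iff.mpr ?_
    intro g hg i₀
    have hpow : ∀ i : ℕ, ∑ l : Fin m, g l • (α l ^ q ^ i) = 0 := by
      intro i
      have h0 : ∑ l : Fin m, (g l • α l) ^ q ^ i = 0 := by
        rw [← hsumpow (fun l => g l • α l) i, hg, zero_pow (hqine i)]
      simpa only [hsmulpow] using h0
    have h1 : ∑ i ∈ Finset.range m, α i₀ ^ q ^ i * (∑ l : Fin m, g l • (α l ^ q ^ i)) = 0 := by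
      apply Finset.sum_eq_zero; intro i _; rw [hpow i, mul_zero]
    have h2 : ∑ i ∈ Finset.range m, α i₀ ^ q ^ i * (∑ l : Fin m, g l • (α l ^ q ^ i))
        = ∑ l : Fin m, g l • (∑ i ∈ Finset.range m, α i₀ ^ q ^ i * α l ^ q ^ i) := by
      simp only [Finset.mul_sum]
      rw [Finset.sum_comm]
      simp only [Finset.smul_sum]
      exact Finset.sum_congr rfl fun l _ => Finset.sum_congr rfl fun i _ =>
        mul_smul_comm _ _ _
    have h4 : ∑ l : Fin m, g l • (∑ i ∈ Finset.range m, α i₀ ^ q ^ i * α l ^ q ^ i)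
        = g i₀ • (1 : F) := by
      rw [Finset.sum_congr rfl (fun l _ => by rw [hGramSum i₀ l])]
      simp
    have h5 : g i₀ • (1 : F) = 0 := by rw [← h4, ← h2]; exact h1
    rw [Algebra.smul_def, mul_one] at h5
    exact (_root_.map_eq_zero (algebraMap K F)).mp h5
  have hbasis : ∃ b : Module.Basis (Fin m) K F, ⇑b = α :=
    ⟨basisOfLinearIndependentOfCardEqFinrank hli (by rw [Fintype.card_fin]; exact hfr.symm),
      coe_basisOfLinearIndependentOfCardEqFinrank _ _⟩
  -- the rows form an F-basis of F^m
  set r : Fin m → (Fin m → F) := fun i l => α l ^ q ^ (i : ℕ) with hr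
  have hliF : LinearIndependent F r := by
    refine Fintype.linearIndependent_iff.mpr ?_
    intro lam hlam j
    have happ : ∀ l : Fin m, ∑ i : Fin m, lam i * α l ^ q ^ (i : ℕ) = 0 := by
      intro l
      have := congrFun hlam l
      simpa [hr, Finset.sum_apply, Pi.smul_apply, smul_eq_mul] using this
    have h5 : ∑ l : Fin m, (∑ i : Fin m, lam i * α l ^ q ^ (i : ℕ)) * α l ^ q ^ (j : ℕ) = 0 := by
      apply Finset.sum_eq_zero; intro l _; rw [happ l, zero_mul]
    have h6 : ∑ l : Fin m, (∑ i : Fin m, lam i * α l ^ q ^ (i : ℕ)) * α l ^ q ^ (j : ℕ)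
        = ∑ i : Fin m, lam i * (∑ l : Fin m, α l ^ q ^ (i : ℕ) * α l ^ q ^ (j : ℕ)) := by
      simp only [Finset.sum_mul]
      rw [Finset.sum_comm]
      simp only [Finset.mul_sum]
      exact Finset.sum_congr rfl fun i _ => Finset.sum_congr rfl fun l _ => by ring
    rw [h6, Finset.sum_congr rfl (fun i _ => by rw [hOrtho i j])] at h5
    simpa using h5
  have hbR : ∃ bR : Module.Basis (Fin m) F (Fin m → F), ⇑bR = r :=
    ⟨basisOfLinearIndependentOfCardEqFinrank hliF
      (by simp [Module.finrank_pi]),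
      coe_basisOfLinearIndependentOfCardEqFinrank _ _⟩
  obtain ⟨bR, hbReq⟩ := hbR
  -- abbreviations
  set e := m / 2 with he_def
  have hme : m = e + e := by omega
  have he1 : 0 < e := by omega
  refine ⟨α, hbasis, le_antisymm ?_ ?_⟩
  · -- gab ⊆ dual
    apply Submodule.span_le.mpr
    rintro _ ⟨i, rfl⟩
    have hsk : gab q e α ≤ semiKer q s e m hq2s (fun j => α j ^ q ^ ((i : Fin e) : ℕ)) := by
      apply Submodule.span_le.mpr
      rintro _ ⟨jj, rfl⟩
      show ∑ l, α l ^ q ^ ((i : Fin e) : ℕ) * (α l ^ q ^ ((jj : Fin e) : ℕ)) ^ q ^ e = 0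
      have hexp : ∀ l : Fin m, (α l ^ q ^ ((jj : Fin e) : ℕ)) ^ q ^ e
          = α l ^ q ^ ((jj : ℕ) + e) := by
        intro l; rw [← pow_mul, ← pow_add]
      rw [Finset.sum_congr rfl (fun l _ => by rw [hexp l])]
      have hilt : (i : ℕ) < m := by have := i.isLt; omega
      have hjlt : (jj : ℕ) + e < m := by have := jj.isLt; omega
      have h := hOrtho ⟨(i : ℕ), hilt⟩ ⟨(jj : ℕ) + e, hjlt⟩
      rw [if_neg (by simp only [Fin.mk.injEq]; have := i.isLt; omega)] at h
      exact h
    show ∀ c ∈ gab q e α, ∑ l, (α l ^ q ^ ((i : Fin e) : ℕ)) * c l ^ q ^ e = 0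
    intro c hc
    exact hsk hc
  · -- dual ⊆ gab
    intro x hx
    have hxr : ∀ c ∈ gab q e α, ∑ l, x l * c l ^ q ^ e = 0 := hx
    set lam : Fin m → F := fun i => bR.repr x i with hlam
    have hxeq : x = ∑ i : Fin m, lam i • r i := by
      have hrepr := bR.sum_repr x
      rw [← hrepr]
      exact Finset.sum_congr rfl fun i _ => by rw [hbReq]
    have hxl : ∀ l, x l = ∑ k2 : Fin m, lam k2 * α l ^ q ^ (k2 : ℕ) := by
      intro l
      rw [hxeq]
      simp [hr, Finset.sum_apply]
    have hlam0 : ∀ i : Fin m, e ≤ (i : ℕ) → lam i = 0 := by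
      intro i hei
      have hjlt : (i : ℕ) - e < e := by have := i.isLt; omega
      set jj : Fin e := ⟨(i : ℕ) - e, hjlt⟩ with hjj
      have hgen : (fun l => α l ^ q ^ ((jj : Fin e) : ℕ)) ∈ gab q e α :=
        Submodule.subset_span ⟨jj, rfl⟩
      have h0 := hxr _ hgen
      have hcl : ∀ l : Fin m, (α l ^ q ^ ((jj : Fin e) : ℕ)) ^ q ^ e = α l ^ q ^ (i : ℕ) := by
        intro l
        rw [← pow_mul, ← pow_add]
        congr 2
        simp only [hjj]
        omega
      rw [Finset.sum_congr rfl (fun l _ => by rw [hcl l])] at h0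
      rw [Finset.sum_congr rfl (fun l _ => by rw [hxl l])] at h0
      have hsw : ∑ l : Fin m, (∑ k2 : Fin m, lam k2 * α l ^ q ^ (k2 : ℕ)) * α l ^ q ^ (i : ℕ)
          = ∑ k2 : Fin m, lam k2 * (∑ l : Fin m, α l ^ q ^ (k2 : ℕ) * α l ^ q ^ (i : ℕ)) := by
        simp only [Finset.sum_mul]
        rw [Finset.sum_comm]
        simp only [Finset.mul_sum]
        exact Finset.sum_congr rfl fun k2 _ => Finset.sum_congr rfl fun l _ => by ring
      rw [hsw, Finset.sum_congr rfl (fun k2 _ => by rw [hOrtho k2 i])] at h0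
      simpa using h0
    rw [hxeq]
    apply Submodule.sum_mem
    intro i _
    by_cases hie : (i : ℕ) < e
    · apply Submodule.smul_mem
      apply Submodule.subset_span
      exact ⟨⟨(i : ℕ), hie⟩, rfl⟩
    · rw [hlam0 i (by omega), zero_smul]
      exact Submodule.zero_mem _
end

section
/- Let α be a self-dual basis of F_{q^m} over F_q, let 1 ≤ k ≤ m−1, and let e be an integer with k+1 ≤ e ≤ m−1. Then dim_{F_{q^m}}(G_k(α) + G_k(α)^{⊥_e}) = max(e, m−k). -/
lemma charP_of_card (p n : ℕ) (hp : p.Prime) (hn : 0 < n) (K : Type) [Field K] [Fintype K]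
    (hK : Fintype.card K = p ^ n) : CharP K p := by
  haveI : Fact p.Prime := ⟨hp⟩
  obtain ⟨p', hcp'⟩ := CharP.exists K
  haveI := hcp'
  have hp'prime : p'.Prime := CharP.char_is_prime K p'
  haveI : Fact p'.Prime := ⟨hp'prime⟩
  obtain ⟨n', hn'⟩ := FiniteField.card K p'
  have hpp' : p = p' := by
    have hdvd : p ∣ p' ^ (n' : ℕ) := by
      rw [← hn'.2, hK]
      exact dvd_pow_self p (by omega)
    exact (Nat.prime_dvd_prime_iff_eq hp hp'prime).mp (hp.prime.dvd_of_dvd_pow hdvd)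
  rwa [hpp']

lemma trace_formula (q m : ℕ) (hq : IsPrimePow q) (hm : 2 ≤ m)
    (K F : Type) [Field K] [Field F] [Algebra K F] [Fintype K] [Fintype F]
    (hK : Fintype.card K = q) (hF : Fintype.card F = q ^ m) (x : F) :
    algebraMap K F (Algebra.trace K F x) = ∑ t : Fin m, x ^ q ^ (t : ℕ) := by
  classical
  obtain ⟨p, n, hp, hn, rfl⟩ := hq
  have hp' : p.Prime := hp.nat_prime
  haveI : Fact p.Prime := ⟨hp'⟩
  have hq2 : 2 ≤ p ^ n := by
    calc 2 ≤ p := hp'.two_le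
    _ ≤ p ^ n := Nat.le_self_pow (by omega) p
  -- char K = p
  haveI hcharK : CharP K p := charP_of_card p n hp' hn K hK
  haveI : CharP F p := charP_of_injective_algebraMap' K (A := F) p
  have hfr : Module.finrank K F = m := by
    have := Module.card_eq_pow_finrank (K := K) (V := F)
    rw [hK, hF] at this
    exact (Nat.pow_right_injective hq2 this.symm)
  -- algebraMap fixed by q-power
  have hfix : ∀ (c : K) (t : ℕ), (algebraMap K F c) ^ (p ^ n) ^ t = algebraMap K F c := by
    intro c t
    induction t with
    | zero => simp
    | succ t ih =>
      rw [pow_succ, pow_mul, ih, ← map_pow, ← hK, FiniteField.pow_card]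
  -- the Frobenius automorphisms
  have hbij0 : ∀ t : ℕ, Function.Bijective (fun x : F => x ^ (p ^ n) ^ t) := by
    intro t
    have : (fun x : F => x ^ (p ^ n) ^ t) = ⇑(iterateFrobenius F p (n * t)) := by
      funext y
      rw [iterateFrobenius_def, pow_mul]
    rw [this]
    exact Finite.injective_iff_bijective.mp (iterateFrobenius F p (n * t)).injective
  let g : Fin m → (F ≃ₐ[K] F) := fun t =>
    AlgEquiv.ofBijective
      { toRingHom := iterateFrobenius F p (n * t),
        commutes' := fun c => by
          simpa [iterateFrobenius_def, pow_mul] using hfix c t } (by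
        convert hbij0 (t : ℕ) using 1; funext y
        show iterateFrobenius F p (n * t) y = _
        rw [iterateFrobenius_def, pow_mul])
  have hg : ∀ (t : Fin m) (y : F), g t y = y ^ (p ^ n) ^ (t : ℕ) := by
    intro t y
    show iterateFrobenius F p (n * t) y = _
    rw [iterateFrobenius_def, pow_mul]
  have hginj : Function.Injective g := by
    intro s t hst
    obtain ⟨ξ, hξ⟩ := IsCyclic.exists_generator (α := Fˣ)
    have hord : orderOf ξ = (p ^ n) ^ m - 1 := by
      rw [orderOf_eq_card_of_forall_mem_zpowers hξ, Nat.card_eq_fintype_card, Fintype.card_units, hF]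
    have hpow : (ξ : F) ^ (p ^ n) ^ (s : ℕ) = (ξ : F) ^ (p ^ n) ^ (t : ℕ) := by
      rw [← hg s ξ, ← hg t ξ, hst]
    have hu : ξ ^ (p ^ n) ^ (s : ℕ) = ξ ^ (p ^ n) ^ (t : ℕ) := by
      ext
      simpa [Units.val_pow_eq_pow_val] using hpow
    have hmod := pow_eq_pow_iff_modEq.mp hu
    rw [hord] at hmod
    have hlt : ∀ a : ℕ, a < m → (p ^ n) ^ a < (p ^ n) ^ m - 1 := by
      intro a ha
      have h1 : (p ^ n) ^ a ≤ (p ^ n) ^ (m - 1) :=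
        Nat.pow_le_pow_right (by omega) (by omega)
      have h2 : (p ^ n) ^ (m - 1) * 2 ≤ (p ^ n) ^ (m - 1) * (p ^ n) :=
        Nat.mul_le_mul_left _ hq2
      have h3 : (p ^ n) ^ (m - 1) * (p ^ n) = (p ^ n) ^ m := by
        rw [← pow_succ]; congr 1; omega
      have h4 : 1 ≤ (p ^ n) ^ (m - 1) := Nat.one_le_pow _ _ (by omega)
      have h5 : p ^ n ≤ (p ^ n) ^ (m - 1) := Nat.le_self_pow (by omega) _
      omega
    have := hmod
    unfold Nat.ModEq at this
    rw [Nat.mod_eq_of_lt (hlt _ s.isLt), Nat.mod_eq_of_lt (hlt _ t.isLt)] at this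
    have := Nat.pow_right_injective hq2 this
    exact Fin.ext this
  have hgbij : Function.Bijective g := by
    rw [Fintype.bijective_iff_injective_and_card]
    refine ⟨hginj, ?_⟩
    rw [Fintype.card_fin, ← Nat.card_eq_fintype_card, IsGalois.card_aut_eq_finrank, hfr]
  rw [trace_eq_sum_automorphisms]
  exact (Fintype.sum_bijective g hgbij _ _ (fun t => (hg t x).symm)).symm

open Matrix in
lemma orth_lemma (q m : ℕ) (hq : IsPrimePow q) (hm : 2 ≤ m)
    (K F : Type) [Field K] [Field F] [Algebra K F] [Fintype K] [Fintype F]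
    (hK : Fintype.card K = q) (hF : Fintype.card F = q ^ m)
    (α : Fin m → F)
    (hsd : ∀ i j, Algebra.trace K F (α i * α j) = if i = j then 1 else 0)
    (s t : Fin m) :
    ∑ j, α j ^ q ^ (s : ℕ) * α j ^ q ^ (t : ℕ) = if s = t then 1 else 0 := by
  classical
  let M : Matrix (Fin m) (Fin m) F := Matrix.of fun u j => α j ^ q ^ (u : ℕ)
  have h1 : Mᵀ * M = 1 := by
    ext i j
    rw [Matrix.mul_apply]
    simp only [Matrix.transpose_apply, Matrix.of_apply, M]
    have h2 : ∀ u : Fin m, α i ^ q ^ (u : ℕ) * α j ^ q ^ (u : ℕ) = (α i * α j) ^ q ^ (u : ℕ) :=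
      fun u => (mul_pow _ _ _).symm
    rw [Finset.sum_congr rfl fun u _ => h2 u,
      ← trace_formula q m hq hm K F hK hF (α i * α j), hsd i j]
    by_cases h : i = j <;> simp [h, Matrix.one_apply]
  have h2 : M * Mᵀ = 1 := mul_eq_one_comm.mpr h1
  have h3 : (M * Mᵀ) s t = (1 : Matrix (Fin m) (Fin m) F) s t := by rw [h2]
  rw [Matrix.mul_apply] at h3
  simp only [Matrix.transpose_apply, Matrix.of_apply, Matrix.one_apply, M] at h3
  simpa using h3

/-- For a self-dual basis `α`, `1 ≤ k ≤ m-1` and `k+1 ≤ e ≤ m-1`,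
`dim (G_k(α) + G_k(α)^{⊥_e}) = max e (m - k)`. -/
theorem finrank_sup_gab_galoisDual_of_gt
    (q m : ℕ) (hq : IsPrimePow q) (hm : 0 < m)
    (K F : Type) [Field K] [Field F] [Algebra K F] [Fintype K] [Fintype F]
    (hK : Fintype.card K = q) (hF : Fintype.card F = q ^ m)
    (α : Fin m → F) (hα : ∃ b : Module.Basis (Fin m) K F, ⇑b = α)
    (hsd : ∀ i j, Algebra.trace K F (α i * α j) = if i = j then 1 else 0)
    (k e : ℕ) (hk1 : 1 ≤ k) (hk2 : k ≤ m - 1) (he1 : k + 1 ≤ e) (he2 : e ≤ m - 1) :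
    Module.finrank F ↥(gab q k α ⊔ galoisDual q e (gab q k α)) = max e (m - k) := by
  classical
  have hq2 : 2 ≤ q := hq.two_le
  have hm3 : 3 ≤ m := by omega
  have hkm : k < m := by omega
  have hem : e < m := by omega
  -- characteristic
  obtain ⟨p, n, hp, hn, hq_eq⟩ := id hq
  have hp' : p.Prime := hp.nat_prime
  haveI : Fact p.Prime := ⟨hp'⟩
  haveI : CharP F p := charP_of_card p (n * m) hp' (by positivity) F (by
    rw [hF, ← hq_eq, ← pow_mul])
  -- the vectors
  set v : Fin m → (Fin m → F) := fun s j => α j ^ q ^ (s : ℕ) with hv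
  have horth : ∀ s t : Fin m, ∑ j, v s j * v t j = if s = t then 1 else 0 :=
    fun s t => orth_lemma q m hq (by omega) K F hK hF α hsd s t
  have hdot : ∀ (c : Fin m → F) (t : Fin m), ∑ j, (∑ s, c s • v s) j * v t j = c t := by
    intro c t
    have h1 : ∑ j, (∑ s, c s • v s) j * v t j = ∑ s, c s * ∑ j, v s j * v t j := by
      simp only [Finset.sum_apply, Pi.smul_apply, smul_eq_mul, Finset.sum_mul]
      rw [Finset.sum_comm]
      exact Finset.sum_congr rfl fun s _ => by
        rw [Finset.mul_sum]
        exact Finset.sum_congr rfl fun j _ => (mul_assoc _ _ _)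
    rw [h1]
    simp [horth, mul_ite, Finset.sum_ite_eq']
  have hli : LinearIndependent F v := by
    rw [Fintype.linearIndependent_iff]
    intro c hc t
    have := hdot c t
    rw [hc] at this
    simpa using this.symm
  haveI : Nonempty (Fin m) := ⟨⟨0, hm⟩⟩
  have hcard : Fintype.card (Fin m) = Module.finrank F (Fin m → F) := by
    simp [Module.finrank_pi]
  let b : Module.Basis (Fin m) F (Fin m → F) := basisOfLinearIndependentOfCardEqFinrank hli hcard
  have hb : ⇑b = v := coe_basisOfLinearIndependentOfCardEqFinrank hli hcard
  have hrepr : ∀ (x : Fin m → F) (t : Fin m), ∑ j, x j * v t j = b.repr x t := by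
    intro x t
    have h2 := hdot (fun s => b.repr x s) t
    have h3 : (∑ s, b.repr x s • v s) = x := by
      rw [← hb]; exact b.sum_repr x
    rw [h3] at h2
    exact h2
  -- power mod m
  have hxm : ∀ y : F, y ^ q ^ m = y := by
    intro y; rw [← hF]; exact FiniteField.pow_card y
  have hpowmod : ∀ (y : F) (a : ℕ), y ^ q ^ (a % m) = y ^ q ^ a := by
    intro y a
    conv_rhs => rw [← Nat.div_add_mod a m]
    generalize a / m = d
    induction d with
    | zero => simp
    | succ d ih =>
      have he' : m * (d + 1) + a % m = (m * d + a % m) + m := by ring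
      rw [he', pow_add, pow_mul, hxm, ← ih]
  -- the shift map
  set σ : Fin k → Fin m := fun i => ⟨(e + (i : ℕ)) % m, Nat.mod_lt _ hm⟩ with hσ
  have hσval : ∀ i : Fin k, ((σ i : Fin m) : ℕ)
      = if e + (i : ℕ) < m then e + (i : ℕ) else e + (i : ℕ) - m := by
    intro i
    have hik := i.isLt
    show (e + (i : ℕ)) % m = _
    split_ifs with h
    · exact Nat.mod_eq_of_lt h
    · have h2 : e + (i : ℕ) - m < m := by omega
      rw [Nat.mod_eq_sub_mod (by omega), Nat.mod_eq_of_lt h2]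
  -- dual membership characterization
  have key : ∀ (x : Fin m → F) (i : Fin k),
      ∑ j, x j * (α j ^ q ^ (i : ℕ)) ^ q ^ e = b.repr x (σ i) := by
    intro x i
    rw [← hrepr x (σ i)]
    refine Finset.sum_congr rfl fun j _ => ?_
    congr 1
    show (α j ^ q ^ (i : ℕ)) ^ q ^ e = α j ^ q ^ ((e + (i : ℕ)) % m)
    rw [hpowmod (α j) (e + (i : ℕ)), ← pow_mul, ← pow_add, Nat.add_comm (i : ℕ) e]
  have hqe : ∀ y z : F, (y + z) ^ q ^ e = y ^ q ^ e + z ^ q ^ e := by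
    intro y z
    rw [← hq_eq, ← pow_mul]
    exact add_pow_char_pow y z p (n * e)
  have hmem : ∀ x : (Fin m → F),
      x ∈ galoisDual q e (gab q k α) ↔ ∀ i : Fin k, b.repr x (σ i) = 0 := by
    intro x
    have hd : x ∈ galoisDual q e (gab q k α) ↔
        ∀ c ∈ gab q k α, ∑ j, x j * c j ^ q ^ e = 0 := Iff.rfl
    rw [hd]
    constructor
    · intro hx i
      rw [← key x i]
      exact hx _ (Submodule.subset_span ⟨i, rfl⟩)
    · intro hx c hc
      have hc' : c ∈ Submodule.span F
          (Set.range fun i : Fin k => fun j : Fin m => α j ^ q ^ (i : ℕ)) := hc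
      clear hc
      induction hc' using Submodule.span_induction with
      | mem c hmemc =>
        obtain ⟨i, rfl⟩ := hmemc
        rw [key x i]
        exact hx i
      | zero =>
        have hz : (0 : F) ^ q ^ e = 0 := zero_pow (by positivity)
        simp [hz]
      | add c d hcm hdm ihc ihd =>
        have hsum : ∀ j, (c + d) j ^ q ^ e = c j ^ q ^ e + d j ^ q ^ e := fun j => hqe _ _
        simp only [hsum, mul_add, Finset.sum_add_distrib, ihc, ihd, add_zero]
      | smul a c hcm ihc =>
        have hsm : ∀ j, (a • c) j ^ q ^ e = a ^ q ^ e * c j ^ q ^ e := by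
          intro j; show (a * c j) ^ q ^ e = _; rw [mul_pow]
        simp only [hsm]
        rw [Finset.sum_congr rfl fun j _ =>
          (by ring : x j * (a ^ q ^ e * c j ^ q ^ e) = a ^ q ^ e * (x j * c j ^ q ^ e)),
          ← Finset.mul_sum, ihc, mul_zero]
  -- the index sets
  set Sk : Finset (Fin m) := Finset.univ.filter (fun s => (s : ℕ) < k) with hSk
  set W : Finset (Fin m) := Finset.image σ Finset.univ with hW
  have hgab : gab q k α = Submodule.span F (⇑b '' ↑Sk) := by
    show Submodule.span F _ = _
    congr 1
    ext y
    simp only [Set.mem_range, Set.mem_image, Finset.mem_coe, hSk, Finset.mem_filter,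
      Finset.mem_univ, true_and, hb]
    constructor
    · rintro ⟨i, rfl⟩
      exact ⟨⟨(i : ℕ), lt_trans i.isLt hkm⟩, i.isLt, rfl⟩
    · rintro ⟨s, hs, rfl⟩
      exact ⟨⟨(s : ℕ), hs⟩, rfl⟩
  have hdualspan : galoisDual q e (gab q k α) = Submodule.span F (⇑b '' ↑Wᶜ) := by
    ext x
    rw [Module.Basis.mem_span_image, hmem x]
    constructor
    · intro h s hs
      simp only [Finset.mem_coe, Finsupp.mem_support_iff] at hs
      rw [Finset.mem_coe, Finset.mem_compl, hW, Finset.mem_image]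
      rintro ⟨i, -, rfl⟩
      exact hs (h i)
    · intro hsub i
      by_contra hne
      have : σ i ∈ (b.repr x).support := Finsupp.mem_support_iff.mpr hne
      have h2 := hsub this
      rw [Finset.mem_coe, Finset.mem_compl, hW, Finset.mem_image] at h2
      exact h2 ⟨i, Finset.mem_univ i, rfl⟩
  set T : Finset (Fin m) := Sk ∪ Wᶜ with hT
  have hsup : gab q k α ⊔ galoisDual q e (gab q k α) = Submodule.span F (⇑b '' ↑T) := by
    rw [hdualspan, hgab, ← Submodule.span_union, ← Set.image_union, ← Finset.coe_union]
  -- linear independence of the image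
  have hset : (↑(T.image ⇑b) : Set (Fin m → F)) ⊆ Set.range ⇑b := by
    intro y hy
    rw [Finset.mem_coe, Finset.mem_image] at hy
    obtain ⟨s, -, rfl⟩ := hy
    exact ⟨s, rfl⟩
  have hliT : LinearIndependent F ((↑) : ↑(↑(T.image ⇑b) : Set (Fin m → F)) → (Fin m → F)) :=
    (((linearIndepOn_id_range_iff b.injective).mpr b.linearIndependent).mono hset).linearIndependent
  -- counting
  have hσinj : Function.Injective σ := by
    intro i1 i2 h
    have h1 := hσval i1
    have h2 := hσval i2
    have h3 : ((σ i1 : Fin m) : ℕ) = ((σ i2 : Fin m) : ℕ) := by rw [h]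
    have hik1 := i1.isLt
    have hik2 := i2.isLt
    apply Fin.ext
    split_ifs at h1 h2 <;> omega
  have hTc : Tᶜ = Finset.image σ (Finset.univ.filter fun i : Fin k => (i : ℕ) < min k (m - e)) := by
    ext w
    constructor
    · intro hw
      rw [hT, Finset.compl_union, compl_compl] at hw
      obtain ⟨hw1, hw2⟩ := Finset.mem_inter.mp hw
      have hw1' : ¬ ((w : ℕ) < k) := by
        intro hlt
        exact (Finset.mem_compl.mp hw1) (by simp [hSk, hlt])
      obtain ⟨i, -, rfl⟩ := Finset.mem_image.mp (by rwa [hW] at hw2)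
      refine Finset.mem_image.mpr ⟨i, Finset.mem_filter.mpr ⟨Finset.mem_univ i, ?_⟩, rfl⟩
      have hvi := hσval i
      have hik := i.isLt
      split_ifs at hvi <;> omega
    · intro hw
      obtain ⟨i, hi, rfl⟩ := Finset.mem_image.mp hw
      have hi' : (i : ℕ) < min k (m - e) := (Finset.mem_filter.mp hi).2
      rw [hT, Finset.compl_union, compl_compl, Finset.mem_inter]
      have hvi := hσval i
      have hik := i.isLt
      refine ⟨Finset.mem_compl.mpr ?_,
        by rw [hW]; exact Finset.mem_image.mpr ⟨i, Finset.mem_univ i, rfl⟩⟩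
      intro hmem2
      rw [hSk, Finset.mem_filter] at hmem2
      have hlt2 : ((σ i : Fin m) : ℕ) < k := hmem2.2
      split_ifs at hvi <;> omega
  have hck : min k (m - e) ≤ k := min_le_left _ _
  have hfiltcard : (Finset.univ.filter fun i : Fin k => (i : ℕ) < min k (m - e)).card
      = min k (m - e) := by
    have himg2 : (Finset.univ.filter fun i : Fin k => (i : ℕ) < min k (m - e)) =
        Finset.image (Fin.castLE hck) Finset.univ := by
      ext i
      constructor
      · intro hi
        have hi2 : (i : ℕ) < min k (m - e) := (Finset.mem_filter.mp hi).2
        exact Finset.mem_image.mpr ⟨⟨(i : ℕ), hi2⟩, Finset.mem_univ _, Fin.ext rfl⟩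
      · intro hi
        obtain ⟨j, -, rfl⟩ := Finset.mem_image.mp hi
        exact Finset.mem_filter.mpr ⟨Finset.mem_univ _, by simpa using j.isLt⟩
    rw [himg2, Finset.card_image_of_injective _ (Fin.castLE_injective hck), Finset.card_univ,
      Fintype.card_fin]
  have hTcc : Tᶜ.card = min k (m - e) := by
    rw [hTc, Finset.card_image_of_injective _ hσinj, hfiltcard]
  have hTval : T.card = m - min k (m - e) := by
    have h4 := Finset.card_add_card_compl T
    rw [Fintype.card_fin] at h4
    omega
  rw [hsup, show (⇑b '' ↑T) = (↑(T.image ⇑b) : Set (Fin m → F)) from (Finset.coe_image).symm,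
    finrank_span_finset_eq_card hliT, Finset.card_image_of_injective T b.injective, hTval]
  omega
end
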